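/- arXiv:2310.17067 — 4 statements merged into one kernel-verified Lean document; each statement's English description precedes it below -/
import Mathlib

section
/- Representation Formula: Let Ω ⊆ ℍ be an axially symmetric s-domain, let f : Ω → ℍ be slice regular, and let i ∈ 𝕊². Then for every q = x + I_q y ∈ Ω with x, y ∈ ℝ and I_q ∈ 𝕊², one has f(x + I_q y) = ½[ f(x + i y) + f(x − i y) ] + ½ I_q i [ f(x − i y) − f(x + i y) ]. -/
noncomputable section

open MeasureTheory Filter

notation "ℍ" => Quaternion ℝ

/-- The set of pure imaginary unit quaternions `𝕊²`. -/
def Sph2 (i : ℍ) : Prop := i.re = 0 ∧ ‖i‖ = 1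

/-- Ordered pairs of orthogonal pure imaginary unit quaternions (the set `T`). -/
def OrthPair (i j : ℍ) : Prop := Sph2 i ∧ Sph2 j ∧ (i * star j).re = 0

/-- The slice complex plane `ℂ(i) = {x + y i}`. -/
def CC (i : ℍ) : Set ℍ := {q | ∃ x y : ℝ, q = (x : ℍ) + y • i}

/-- Slice regularity of `f` on `Ω`: real differentiability together with the
Cauchy–Riemann condition `½(∂/∂x + i ∂/∂y) f = 0` on every slice. -/
def SliceRegularOn (f : ℍ → ℍ) (Ω : Set ℍ) : Prop :=
  ∀ ⦃i : ℍ⦄, Sph2 i → ∀ x y : ℝ, ((x : ℍ) + y • i) ∈ Ω →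
    DifferentiableAt ℝ f ((x : ℍ) + y • i) ∧
    fderiv ℝ f ((x : ℍ) + y • i) 1 + i * fderiv ℝ f ((x : ℍ) + y • i) i = 0

/-- Axially symmetric slice domain. -/
structure AxSymSDomain (Ω : Set ℍ) : Prop where
  isOpen : IsOpen Ω
  isConnected : IsConnected Ω
  real_nonempty : (Ω ∩ Set.range ((↑) : ℝ → ℍ)).Nonempty
  slice_connected : ∀ ⦃i : ℍ⦄, Sph2 i →
    IsConnected {p : ℝ × ℝ | ((p.1 : ℍ) + p.2 • i) ∈ Ω}
  axial : ∀ (x y : ℝ) ⦃i : ℍ⦄, Sph2 i → ((x : ℍ) + y • i) ∈ Ω →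
    ∀ ⦃j : ℍ⦄, Sph2 j → ((x : ℍ) + y • j) ∈ Ω

/-- The slice `Ω ∩ ℂ(i)` as a subset of `ℝ²`. -/
def sliceSet (Ω : Set ℍ) (i : ℍ) : Set (ℝ × ℝ) := {p | ((p.1 : ℍ) + p.2 • i) ∈ Ω}

/-- `‖f‖²_{A_i(Ω)} = ∫_{Ω ∩ ℂ(i)} ‖f‖² dσ_i`. -/
def bergmanNormSq (Ω : Set ℍ) (i : ℍ) (f : ℍ → ℍ) : ℝ :=
  ∫ p in sliceSet Ω i, ‖f ((p.1 : ℍ) + p.2 • i)‖ ^ 2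

/-- The slice regular Bergman norm `‖f‖_{A_i(Ω)}`. -/
def bergmanNorm (Ω : Set ℍ) (i : ℍ) (f : ℍ → ℍ) : ℝ :=
  Real.sqrt (bergmanNormSq Ω i f)

/-- Membership in the slice regular Bergman space `A_i(Ω)`. -/
def MemBergman (Ω : Set ℍ) (i : ℍ) (f : ℍ → ℍ) : Prop :=
  SliceRegularOn f Ω ∧
  IntegrableOn (fun p : ℝ × ℝ => ‖f ((p.1 : ℍ) + p.2 • i)‖ ^ 2) (sliceSet Ω i)

/-- The quaternionic Bergman inner product `⟨f,g⟩ = ∫ conj(f) g dσ_i`. -/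
def bergmanInner (Ω : Set ℍ) (i : ℍ) (f g : ℍ → ℍ) : ℍ :=
  ∫ p in sliceSet Ω i, star (f ((p.1 : ℍ) + p.2 • i)) * g ((p.1 : ℍ) + p.2 • i)

/-- The open unit ball `𝔹⁴ ⊆ ℍ`. -/
def B4 : Set ℍ := {q | ‖q‖ < 1}

/-- The open unit disk `D ⊆ ℝ²`. -/
def unitDisk : Set (ℝ × ℝ) := {p | p.1 ^ 2 + p.2 ^ 2 < 1}

/-- `‖f‖²_{A_i(𝔹⁴)} = ∫_D ‖f(x + yi)‖² dμ(x,y)`. -/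
def bergNormSqB (i : ℍ) (f : ℍ → ℍ) : ℝ :=
  ∫ p in unitDisk, ‖f ((p.1 : ℍ) + p.2 • i)‖ ^ 2

/-- The Bergman norm on `A_i(𝔹⁴)`. -/
def bergNormB (i : ℍ) (f : ℍ → ℍ) : ℝ := Real.sqrt (bergNormSqB i f)

/-- Membership in `A_i(𝔹⁴)`. -/
def MemBergB (i : ℍ) (f : ℍ → ℍ) : Prop :=
  SliceRegularOn f B4 ∧
  IntegrableOn (fun p : ℝ × ℝ => ‖f ((p.1 : ℍ) + p.2 • i)‖ ^ 2) unitDisk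

open Classical in
/-- `I_q`: the imaginary unit direction of `q` (an arbitrary fixed unit when `q` is real). -/
def Imu (q : ℍ) : ℍ := if q.im = 0 then ⟨0, 1, 0, 0⟩ else ‖q.im‖⁻¹ • q.im

/-- The extension operator `P_{k,·}`: for a slice function `g : ℝ² → ℍ` (representing
`x + y k ↦ g(x,y)`), `Pext k g (q) = ½[(1 + I_q k) g(x, −y) + (1 − I_q k) g(x, y)]`
where `q = x + I_q y`, `y = ‖im q‖ ≥ 0`. -/
def Pext (k : ℍ) (g : ℝ × ℝ → ℍ) (q : ℍ) : ℍ :=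
  (2⁻¹ : ℝ) • ((1 + Imu q * k) * g (q.re, -‖q.im‖) + (1 - Imu q * k) * g (q.re, ‖q.im‖))

/-- The slice function `x + y k ↦ a + b k + c l + d kl`. -/
def sliceFun (a b c d : ℝ × ℝ → ℝ) (k l : ℍ) (p : ℝ × ℝ) : ℍ :=
  (a p : ℍ) + b p • k + c p • l + d p • (k * l)

/-- `L²(D)` norm of a real function on the unit disk. -/
def L2D (a : ℝ × ℝ → ℝ) : ℝ := Real.sqrt (∫ p in unitDisk, a p ^ 2)

/-- Finiteness of the `L²(D)` norm. -/
def MemL2D (a : ℝ × ℝ → ℝ) : Prop := IntegrableOn (fun p => a p ^ 2) unitDisk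

/-- Harmonicity on the unit disk: `a` is `C²` and `∂²a/∂x² + ∂²a/∂y² = 0`. -/
def HarmonicOnDisk (a : ℝ × ℝ → ℝ) : Prop :=
  ContDiffOn ℝ 2 a unitDisk ∧ ∀ p ∈ unitDisk,
    fderiv ℝ (fun q => fderiv ℝ a q (1, 0)) p (1, 0)
      + fderiv ℝ (fun q => fderiv ℝ a q (0, 1)) p (0, 1) = 0

/-- `(a,b)` is a pair of conjugate harmonic functions on `D`:
both harmonic and satisfying the Cauchy–Riemann equations. -/
def ConjHarmPair (a b : ℝ × ℝ → ℝ) : Prop :=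
  HarmonicOnDisk a ∧ HarmonicOnDisk b ∧
  ∀ p ∈ unitDisk,
    fderiv ℝ a p (1, 0) = fderiv ℝ b p (0, 1) ∧
    fderiv ℝ a p (0, 1) = -fderiv ℝ b p (1, 0)

/-- `(a,b) ∈ HL²(D)`. -/
def HLpair (a b : ℝ × ℝ → ℝ) : Prop := ConjHarmPair a b ∧ MemL2D a ∧ MemL2D b

/-- Raw data of an element of `HL(D)`: a 2×2 matrix `(a b; c d)` of real functions
on the disk together with a pair `(k,l)` of quaternions. -/
structure HLElem where
  a : ℝ × ℝ → ℝ
  b : ℝ × ℝ → ℝ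
  c : ℝ × ℝ → ℝ
  d : ℝ × ℝ → ℝ
  k : ℍ
  l : ℍ

/-- Membership in `HL(D)`: `(a,b),(c,d) ∈ HL²(D)` and `(k,l) ∈ T`. -/
def HLElem.mem (A : HLElem) : Prop := HLpair A.a A.b ∧ HLpair A.c A.d ∧ OrthPair A.k A.l

/-- The bundle projection `P_{𝔹⁴}((a b; c d),(k,l)) = P_{k,l}[a + bk + cl + dkl]`. -/
def HLElem.proj (A : HLElem) : ℍ → ℍ := Pext A.k (sliceFun A.a A.b A.c A.d A.k A.l)

/-- The metric of `HL(D)`. -/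
def HLdist (A B : HLElem) : ℝ :=
  L2D (A.a - B.a) + L2D (A.b - B.b) + L2D (A.c - B.c) + L2D (A.d - B.d)
    + Real.sqrt (‖A.k - B.k‖ ^ 2 + ‖A.l - B.l‖ ^ 2)

/-- `Q_{k,l}[f] : (x,y) ↦ f(x + y k)`, the restriction of `f` to the slice `ℂ(k)`. -/
def Qsl (f : ℍ → ℍ) (k : ℍ) (p : ℝ × ℝ) : ℍ := f ((p.1 : ℍ) + p.2 • k)

/-- `D₁[f,k,l] = (Q[f] + conj(Q[f]))/2 = Re (Q[f])`. -/
def Dc1 (f : ℍ → ℍ) (k _l : ℍ) (p : ℝ × ℝ) : ℝ := (Qsl f k p).re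

/-- `D₂[f,k,l] = −(Q[f]·k + conj(Q[f]·k))/2 = −Re (Q[f]·k)`. -/
def Dc2 (f : ℍ → ℍ) (k _l : ℍ) (p : ℝ × ℝ) : ℝ := -(Qsl f k p * k).re

/-- `D₃[f,k,l] = −(Q[f]·l + conj(Q[f]·l))/2 = −Re (Q[f]·l)`. -/
def Dc3 (f : ℍ → ℍ) (k l : ℍ) (p : ℝ × ℝ) : ℝ := -(Qsl f k p * l).re

/-- `D₄[f,k,l] = (Q[f]·lk + conj(Q[f]·lk))/2 = Re (Q[f]·(lk))`. -/
def Dc4 (f : ℍ → ℍ) (k l : ℍ) (p : ℝ × ℝ) : ℝ := (Qsl f k p * (l * k)).re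

/-- The section map `S_{k,l}[f] = ((D₁ D₂; D₃ D₄), (k,l))`. -/
def Smap (f : ℍ → ℍ) (k l : ℍ) : HLElem :=
  ⟨Dc1 f k l, Dc2 f k l, Dc3 f k l, Dc4 f k l, k, l⟩

/-- The metric `ρ_i` on `A_i(𝔹⁴) × T`. -/
def rhoA (i : ℍ) (f : ℍ → ℍ) (k l : ℍ) (g : ℍ → ℍ) (m n : ℍ) : ℝ :=
  bergNormB i (f - g) + Real.sqrt (‖k - m‖ ^ 2 + ‖l - n‖ ^ 2)

lemma sph2_sq {I : ℍ} (hI : Sph2 I) : I * I = -1 := by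
  have hs : star I = -I := Quaternion.star_eq_neg.mpr hI.1
  have hn : Quaternion.normSq I = 1 := by
    rw [Quaternion.normSq_eq_norm_mul_self, hI.2, one_mul]
  have : I * star I = ((Quaternion.normSq I : ℝ) : ℍ) := Quaternion.self_mul_star I
  rw [hs, mul_neg, hn] at this
  simpa [neg_eq_iff_eq_neg] using this

lemma sph2_neg {i : ℍ} (h : Sph2 i) : Sph2 (-i) := ⟨by simp [h.1], by simp [h.2]⟩

lemma norm_slice {I : ℍ} (hI : Sph2 I) (z : ℂ) :
    ‖((z.re : ℍ) + z.im • I)‖ = ‖z‖ := by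
  have hn : Quaternion.normSq I = 1 := by
    rw [Quaternion.normSq_eq_norm_mul_self, hI.2, one_mul]
  have hnd := Quaternion.normSq_def' I
  rw [hn] at hnd
  have h1 : Quaternion.normSq ((z.re : ℍ) + z.im • I) = z.re ^ 2 + z.im ^ 2 := by
    rw [Quaternion.normSq_def']
    simp [Quaternion.re_add, Quaternion.imI_add, Quaternion.imJ_add, Quaternion.imK_add,
      Quaternion.re_smul, Quaternion.imI_smul, Quaternion.imJ_smul, Quaternion.imK_smul,
      hI.1, smul_eq_mul]
    rw [hI.1] at hnd
    all_goals linear_combination (-z.im ^ 2) * hnd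
  have h2 : ‖((z.re : ℍ) + z.im • I)‖ * ‖((z.re : ℍ) + z.im • I)‖ = ‖z‖ * ‖z‖ := by
    rw [← Quaternion.normSq_eq_norm_mul_self, h1]
    rw [← pow_two, Complex.sq_norm, Complex.normSq_apply]; ring
  exact (mul_self_inj (norm_nonneg _) (norm_nonneg _)).mp h2

lemma coe_eq_smul_one (r : ℝ) : (r : ℍ) = r • (1 : ℍ) := by
  rw [← Quaternion.coe_mul_eq_smul, mul_one]

/-- the embedding `z ↦ z.re + z.im • J` as a continuous `ℝ`-linear map. -/
def emb (J : ℍ) : ℂ →L[ℝ] ℍ :=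
  Complex.reCLM.smulRight (1 : ℍ) + Complex.imCLM.smulRight J

lemma emb_apply (J : ℍ) (z : ℂ) : emb J z = (z.re : ℍ) + z.im • J := by
  simp [emb, coe_eq_smul_one]

lemma key_identity (I i a b c : ℍ) (hI2 : I * I = -1) (hi2 : i * i = -1) :
    I * a - (2⁻¹ : ℝ) • ((1 - I * i) * (i * b)) + (2⁻¹ : ℝ) • ((1 + I * i) * (i * c))
      = I * (a - (2⁻¹ : ℝ) • ((1 - I * i) * b) - (2⁻¹ : ℝ) • ((1 + I * i) * c)) := by
  have h1 : (1 - I * i) * (i * b) = (i + I) * b := by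
    calc (1 - I * i) * (i * b) = i * b - I * (i * i * b) := by
          rw [sub_mul, one_mul, mul_assoc, mul_assoc]
      _ = i * b + I * b := by rw [hi2, neg_one_mul, mul_neg, sub_neg_eq_add]
      _ = (i + I) * b := (add_mul i I b).symm
  have h2 : (1 + I * i) * (i * c) = (i - I) * c := by
    calc (1 + I * i) * (i * c) = i * c + I * (i * i * c) := by
          rw [add_mul, one_mul, mul_assoc, mul_assoc]
      _ = i * c - I * c := by rw [hi2, neg_one_mul, mul_neg, ← sub_eq_add_neg]
      _ = (i - I) * c := (sub_mul i I c).symm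
  have h3 : I * ((1 - I * i) * b) = (I + i) * b := by
    calc I * ((1 - I * i) * b) = I * b - I * I * (i * b) := by
          rw [sub_mul, one_mul, mul_sub, ← mul_assoc, ← mul_assoc, mul_assoc (I*I) i b]
      _ = I * b + i * b := by rw [hI2, neg_one_mul, sub_neg_eq_add]
      _ = (I + i) * b := (add_mul I i b).symm
  have h4 : I * ((1 + I * i) * c) = (I - i) * c := by
    calc I * ((1 + I * i) * c) = I * c + I * I * (i * c) := by
          rw [add_mul, one_mul, mul_add, ← mul_assoc, ← mul_assoc, mul_assoc (I*I) i c]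
      _ = I * c - i * c := by rw [hI2, neg_one_mul, ← sub_eq_add_neg]
      _ = (I - i) * c := (sub_mul I i c).symm
  rw [h1, h2, mul_sub, mul_sub, mul_smul_comm, mul_smul_comm, h3, h4]
  simp only [add_mul, sub_mul, smul_add, smul_sub]
  abel


open Filter in
set_option maxHeartbeats 1000000 in
/-- **Representation Formula.** -/
theorem representation_formula (Ω : Set ℍ) (hΩ : AxSymSDomain Ω)
    (f : ℍ → ℍ) (hf : SliceRegularOn f Ω)
    (i : ℍ) (hi : Sph2 i)
    (x y : ℝ) (I : ℍ) (hI : Sph2 I) (hq : ((x : ℍ) + y • I) ∈ Ω) :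
    f ((x : ℍ) + y • I)
      = (2⁻¹ : ℝ) • (f ((x : ℍ) + y • i) + f ((x : ℍ) - y • i))
        + (2⁻¹ : ℝ) • (I * i * (f ((x : ℍ) - y • i) - f ((x : ℍ) + y • i))) := by
  have hI2 : I * I = -1 := sph2_sq hI
  have hi2 : i * i = -1 := sph2_sq hi
  set Φ : ℂ →ₐ[ℝ] ℍ := Complex.lift ⟨I, hI2⟩ with hΦdef
  have hΦ : ∀ z : ℂ, Φ z = (z.re : ℍ) + z.im • I := by
    intro z
    show Complex.liftAux I hI2 z = _
    rw [Complex.liftAux_apply]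
    simp [Quaternion.algebraMap_def]
  letI : Module ℂ ℍ := Module.compHom ℍ Φ.toRingHom
  have smul_def : ∀ (z : ℂ) (q : ℍ), z • q = Φ z * q := fun z q => rfl
  letI : IsScalarTower ℝ ℂ ℍ := ⟨fun r z q => by
    rw [smul_def, smul_def, _root_.map_smul, smul_mul_assoc]⟩
  letI : NormedSpace ℂ ℍ := ⟨fun z q => by
    rw [smul_def, norm_mul, hΦ, norm_slice hI]⟩
  -- the function g and its vanishing set
  set S : Set ℂ := {z : ℂ | ((z.re : ℍ) + z.im • I) ∈ Ω} with hSdef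
  set g : ℂ → ℍ := fun z =>
    f (emb I z) - (2⁻¹ : ℝ) • ((1 - I * i) * f (emb i z))
      - (2⁻¹ : ℝ) • ((1 + I * i) * f (emb i (Complex.conjCLE z))) with hgdef
  -- g vanishes on the reals
  have hreal : ∀ t : ℝ, g (t : ℂ) = 0 := by
    intro t
    have h1 : emb I (t : ℂ) = (t : ℍ) := by
      rw [emb_apply]; simp
    have h2 : emb i (t : ℂ) = (t : ℍ) := by
      rw [emb_apply]; simp
    have h3 : emb i (Complex.conjCLE (t : ℂ)) = (t : ℍ) := by
      rw [Complex.conjCLE_apply, Complex.conj_ofReal, emb_apply]; simp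
    simp only [hgdef, h1, h2, h3]
    have : (1 - I * i) * f (t : ℍ) + (1 + I * i) * f (t : ℍ) = 2 • f (t : ℍ) := by
      rw [sub_mul, add_mul, one_mul, two_smul]; abel
    have h4 : (2⁻¹ : ℝ) • ((1 - I * i) * f (t : ℍ)) + (2⁻¹ : ℝ) • ((1 + I * i) * f (t : ℍ))
        = f (t : ℍ) := by
      rw [← smul_add, this, ← Nat.cast_smul_eq_nsmul ℝ, smul_smul]
      norm_num
    rw [sub_sub, h4, sub_self]
  -- complex differentiability on S
  have key : ∀ z ∈ S, DifferentiableAt ℂ g z := by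
    intro z hz
    have hmI : ((z.re : ℍ) + z.im • I) ∈ Ω := hz
    have hmi : ((z.re : ℍ) + z.im • i) ∈ Ω := hΩ.axial _ _ hI hmI hi
    have hmi' : ((z.re : ℍ) + (-z.im) • i) ∈ Ω := by
      have := hΩ.axial _ _ hI hmI (sph2_neg hi)
      rwa [smul_neg, ← neg_smul] at this
    obtain ⟨hdA, hcrA⟩ := hf hI z.re z.im hmI
    obtain ⟨hdB, hcrB⟩ := hf hi z.re z.im hmi
    obtain ⟨hdC, hcrC⟩ := hf hi z.re (-z.im) hmi'
    set A := fderiv ℝ f ((z.re : ℍ) + z.im • I) with hA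
    set B := fderiv ℝ f ((z.re : ℍ) + z.im • i) with hB
    set C := fderiv ℝ f ((z.re : ℍ) + (-z.im) • i) with hC
    -- derivative of each piece
    have h1 : HasFDerivAt (fun w : ℂ => f (emb I w)) (A.comp (emb I)) z := by
      refine HasFDerivAt.comp z ?_ (emb I).hasFDerivAt
      rw [emb_apply]; exact hdA.hasFDerivAt
    have h2 : HasFDerivAt (fun w : ℂ => f (emb i w)) (B.comp (emb i)) z := by
      refine HasFDerivAt.comp z ?_ (emb i).hasFDerivAt
      rw [emb_apply]; exact hdB.hasFDerivAt
    have hcj : emb i (Complex.conjCLE z) = (z.re : ℍ) + (-z.im) • i := by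
      rw [emb_apply, Complex.conjCLE_apply]
      simp
    have h3 : HasFDerivAt (fun w : ℂ => f (emb i (Complex.conjCLE w)))
        (C.comp ((emb i).comp (Complex.conjCLE : ℂ →L[ℝ] ℂ))) z := by
      have hcle : HasFDerivAt (fun w : ℂ => emb i (Complex.conjCLE w))
          ((emb i).comp (Complex.conjCLE : ℂ →L[ℝ] ℂ)) z :=
        ((emb i).hasFDerivAt.comp z (Complex.conjCLE : ℂ →L[ℝ] ℂ).hasFDerivAt)
      refine HasFDerivAt.comp z ?_ hcle
      rw [hcj]; exact hdC.hasFDerivAt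
    have hD : HasFDerivAt g
        ((A.comp (emb I))
          - (2⁻¹ : ℝ) • ((1 - I * i) • (B.comp (emb i)))
          - (2⁻¹ : ℝ) • ((1 + I * i) • (C.comp ((emb i).comp
              (Complex.conjCLE : ℂ →L[ℝ] ℂ))))) z := by
      exact (h1.sub ((h2.const_mul (1 - I * i)).const_smul (2⁻¹ : ℝ))).sub
        ((h3.const_mul (1 + I * i)).const_smul (2⁻¹ : ℝ))
    set D := (A.comp (emb I))
          - (2⁻¹ : ℝ) • ((1 - I * i) • (B.comp (emb i)))
          - (2⁻¹ : ℝ) • ((1 + I * i) • (C.comp ((emb i).comp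
              (Complex.conjCLE : ℂ →L[ℝ] ℂ)))) with hDdef
    -- values of D
    have hemb1 : ∀ J : ℍ, emb J (1 : ℂ) = 1 := by
      intro J; rw [emb_apply]; simp
    have hembI : ∀ J : ℍ, emb J Complex.I = J := by
      intro J; rw [emb_apply]; simp
    have hc1 : (Complex.conjCLE : ℂ →L[ℝ] ℂ) 1 = 1 := by simp
    have hcI : (Complex.conjCLE : ℂ →L[ℝ] ℂ) Complex.I = -Complex.I := by simp
    have hD1 : D 1 = A 1 - (2⁻¹ : ℝ) • ((1 - I * i) * B 1)
        - (2⁻¹ : ℝ) • ((1 + I * i) * C 1) := by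
      simp only [hDdef, ContinuousLinearMap.sub_apply, ContinuousLinearMap.smul_apply,
        ContinuousLinearMap.coe_comp', Function.comp_apply, hc1,
        hemb1, smul_eq_mul]
    have hDI : D Complex.I = A I - (2⁻¹ : ℝ) • ((1 - I * i) * B i)
        + (2⁻¹ : ℝ) • ((1 + I * i) * C i) := by
      simp only [hDdef, ContinuousLinearMap.sub_apply, ContinuousLinearMap.smul_apply,
        ContinuousLinearMap.coe_comp', Function.comp_apply, hcI, hembI, smul_eq_mul,
        map_neg, mul_neg, smul_neg, sub_neg_eq_add]
    -- Cauchy-Riemann gives the values in the I (resp. i) directions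
    have hAI : A I = I * A 1 := by
      have h' : I * A 1 + I * (I * A I) = 0 := by rw [← mul_add, hcrA, mul_zero]
      rw [← mul_assoc, hI2, neg_one_mul] at h'
      exact (add_neg_eq_zero.mp h').symm
    have hBi : B i = i * B 1 := by
      have h' : i * B 1 + i * (i * B i) = 0 := by rw [← mul_add, hcrB, mul_zero]
      rw [← mul_assoc, hi2, neg_one_mul] at h'
      exact (add_neg_eq_zero.mp h').symm
    have hCi : C i = i * C 1 := by
      have h' : i * C 1 + i * (i * C i) = 0 := by rw [← mul_add, hcrC, mul_zero]
      rw [← mul_assoc, hi2, neg_one_mul] at h'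
      exact (add_neg_eq_zero.mp h').symm
    -- the candidate ℂ-linear derivative
    have hcont : Continuous fun w : ℂ => w • (D 1) := by
      have : (fun w : ℂ => w • (D 1)) = fun w : ℂ => ((w.re : ℍ) + w.im • I) * (D 1) := by
        funext w; rw [smul_def, hΦ]
      rw [this]
      exact (((Quaternion.continuous_coe.comp Complex.continuous_re)).add
        (Complex.continuous_im.smul continuous_const)).mul continuous_const
    set L : ℂ →L[ℂ] ℍ := ⟨LinearMap.toSpanSingleton ℂ ℍ (D 1), hcont⟩ with hLdef
    have hres : L.restrictScalars ℝ = D := by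
      apply ContinuousLinearMap.ext
      intro w
      have hw : w = w.re • (1 : ℂ) + w.im • Complex.I := by
        rw [Complex.real_smul, Complex.real_smul, mul_one, Complex.re_add_im]
      have hDw : D w = w.re • D 1 + w.im • D Complex.I := by
        conv_lhs => rw [hw]
        rw [map_add, _root_.map_smul, _root_.map_smul]
      have hLw : (L.restrictScalars ℝ) w = w • (D 1) := rfl
      rw [hLw, hDw, smul_def, hΦ, add_mul, Quaternion.coe_mul_eq_smul, smul_mul_assoc]
      congr 1
      congr 1
      -- I * D 1 = D Complex.I
      rw [hD1, hDI, hAI, hBi, hCi]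
      exact (key_identity I i (A 1) (B 1) (C 1) hI2 hi2).symm
    exact ⟨L, hasFDerivAt_of_restrictScalars ℝ hD hres⟩
  -- S is open
  have hScont : Continuous fun z : ℂ => ((z.re : ℍ) + z.im • I) :=
    (Quaternion.continuous_coe.comp Complex.continuous_re).add
      (Complex.continuous_im.smul continuous_const)
  have hSopen : IsOpen S := hΩ.isOpen.preimage hScont
  -- S is preconnected
  have hSconn : IsPreconnected S := by
    have h1 := hΩ.slice_connected hI
    have himg : S = (fun p : ℝ × ℝ => ((p.1 : ℂ) + p.2 * Complex.I)) ''
        {p : ℝ × ℝ | ((p.1 : ℍ) + p.2 • I) ∈ Ω} := by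
      ext z
      constructor
      · intro hz
        exact ⟨(z.re, z.im), hz, by show (z.re : ℂ) + z.im * Complex.I = z; exact Complex.re_add_im z⟩
      · rintro ⟨p, hp, rfl⟩
        show ((((p.1 : ℂ) + p.2 * Complex.I).re : ℍ)
          + ((p.1 : ℂ) + p.2 * Complex.I).im • I) ∈ Ω
        simpa using hp
    rw [himg]
    exact (h1.image _ (Continuous.continuousOn
      ((Complex.continuous_ofReal.comp continuous_fst).add
        ((Complex.continuous_ofReal.comp continuous_snd).mul continuous_const)))).isPreconnected
  -- a real point of S
  obtain ⟨q0, hq0Ω, x0, hx0⟩ := hΩ.real_nonempty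
  have hz0 : ((x0 : ℂ)) ∈ S := by
    show (((x0 : ℂ).re : ℍ) + (x0 : ℂ).im • I) ∈ Ω
    simpa using (hx0 ▸ hq0Ω)
  -- g vanishes frequently near x0
  set u : ℕ → ℝ := fun n => x0 + 1 / ((n : ℝ) + 1) with hudef
  have hfreq : ∃ᶠ z in nhdsWithin (x0 : ℂ) {(x0 : ℂ)}ᶜ, g z = 0 := by
    have htend : Tendsto (fun n : ℕ => ((u n : ℝ) : ℂ)) atTop
        (nhdsWithin (x0 : ℂ) {(x0 : ℂ)}ᶜ) := by
      apply tendsto_nhdsWithin_of_tendsto_nhds_of_eventually_within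
      · have h0 : Tendsto u atTop (nhds x0) := by
          simpa [hudef] using tendsto_const_nhds.add (tendsto_one_div_add_atTop_nhds_zero_nat (𝕜 := ℝ))
        exact (Complex.continuous_ofReal.tendsto x0).comp h0
      · filter_upwards with n
        simp only [Set.mem_compl_iff, Set.mem_singleton_iff]
        intro hcon
        have h2 : u n = x0 := Complex.ofReal_inj.mp hcon
        have h3 : (0 : ℝ) < 1 / ((n : ℝ) + 1) := by positivity
        rw [hudef] at h2
        simp only at h2
        linarith
    exact htend.frequently (Filter.Frequently.of_forall fun n => hreal _)
  -- identity principle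
  have hdiffOn : DifferentiableOn ℂ g S := fun z hz => (key z hz).differentiableWithinAt
  have hg0 : Set.EqOn g 0 S :=
    AnalyticOnNhd.eqOn_zero_of_preconnected_of_frequently_eq_zero
      (hdiffOn.analyticOnNhd hSopen) hSconn hz0 hfreq
  -- apply at z = x + y I
  set z : ℂ := ⟨x, y⟩ with hzdef
  have hzre : z.re = x := rfl
  have hzim : z.im = y := rfl
  have hzS : z ∈ S := by
    show ((z.re : ℍ) + z.im • I) ∈ Ω
    rw [hzre, hzim]; exact hq
  have hgz : g z = 0 := hg0 hzS
  have e1 : emb I z = (x : ℍ) + y • I := by rw [emb_apply, hzre, hzim]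
  have e2 : emb i z = (x : ℍ) + y • i := by rw [emb_apply, hzre, hzim]
  have e3 : emb i (Complex.conjCLE z) = (x : ℍ) - y • i := by
    rw [Complex.conjCLE_apply, emb_apply]
    have : (starRingEnd ℂ) z = ⟨x, -y⟩ := by
      rw [hzdef]; rfl
    rw [this]
    show (x : ℍ) + (-y) • i = _
    rw [neg_smul, ← sub_eq_add_neg]
  simp only [hgdef, e1, e2, e3] at hgz
  rw [sub_sub, sub_eq_zero] at hgz
  rw [hgz]
  simp only [sub_mul, add_mul, one_mul, mul_sub, smul_add, smul_sub]
  abel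
end
end

section
/- Let Ω ⊆ ℍ be an axially symmetric s-domain and let i, k ∈ 𝕊². If f ∈ A_k(Ω), then f ∈ A_i(Ω) and ‖f‖_{A_i(Ω)} ≤ √2 ‖f‖_{A_k(Ω)}. Consequently A_i(Ω) and A_k(Ω) coincide as sets of functions and carry equivalent norms. -/
noncomputable section

open MeasureTheory Filter

lemma Sph2.star_eq {i : ℍ} (hi : Sph2 i) : star i = -i := by
  ext <;> simp [hi.1]

lemma Sph2.normSq' {i : ℍ} (hi : Sph2 i) : Quaternion.normSq i = 1 := by
  rw [Quaternion.normSq_eq_norm_mul_self, hi.2, one_mul]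

lemma Sph2.mul_self {i : ℍ} (hi : Sph2 i) : i * i = -1 := by
  have h2 : i * star i = 1 := by
    rw [Quaternion.self_mul_star, hi.normSq']; simp
  rw [hi.star_eq, mul_neg] at h2
  rw [neg_eq_iff_eq_neg] at h2
  exact h2

lemma Sph2.neg {i : ℍ} (hi : Sph2 i) : Sph2 (-i) := by
  exact ⟨by simp [hi.1], by simp [hi.2]⟩

/-- component map: `q ↦ (Re(wq), -Re(wiq))` as a complex number. -/
def cm (i w q : ℍ) : ℂ := ⟨(w*q).re, -((w*(i*q)).re)⟩

def cmL (i w : ℍ) : ℍ →L[ℝ] ℂ :=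
  LinearMap.toContinuousLinearMap
  { toFun := cm i w
    map_add' := by intro q q'; simp [cm, Complex.ext_iff, mul_add]; ring
    map_smul' := by intro r q; simp [cm, Complex.ext_iff, mul_smul_comm, Complex.real_smul]; ring }

@[simp] lemma cmL_apply (i w q : ℍ) : cmL i w q = cm i w q := rfl

lemma cm_i_mul (i w q : ℍ) (hi : i*i = -1) : cm i w (i * q) = Complex.I * cm i w q := by
  have h : i * (i*q) = -q := by rw [← mul_assoc, hi]; simp
  simp [cm, h, Complex.ext_iff]

lemma diffC {g : ℂ → ℂ} {z : ℂ} {L : ℂ →L[ℝ] ℂ}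
    (h : HasFDerivAt g L z) (hL : L Complex.I = Complex.I * L 1) :
    DifferentiableAt ℂ g z := by
  set M : ℂ →L[ℂ] ℂ := (ContinuousLinearMap.id ℂ ℂ).smulRight (L 1) with hMdef
  have hM : M.restrictScalars ℝ = L := by
    apply ContinuousLinearMap.ext
    intro w
    have hw : w = w.re • (1:ℂ) + w.im • Complex.I := by
      simp [Complex.real_smul, Complex.re_add_im]
    have : L w = w.re • L 1 + w.im • L Complex.I := by
      conv_lhs => rw [hw]
      rw [map_add, L.map_smul, L.map_smul]
    calc (M.restrictScalars ℝ) w = w * L 1 := by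
          simp [hMdef, smul_eq_mul]
      _ = ((w.re:ℂ) + w.im * Complex.I) * L 1 := by rw [Complex.re_add_im]
      _ = w.re • L 1 + w.im • L Complex.I := by
          rw [hL, Complex.real_smul, Complex.real_smul]; ring
      _ = L w := this.symm
  exact (hasFDerivAt_of_restrictScalars ℝ h hM).differentiableAt

lemma sep {i : ℍ} (hi : Sph2 i) :
    ∃ v : ℍ, ∀ q : ℍ, q.re = 0 → (i*q).re = 0 → (v*q).re = 0 → (v*(i*q)).re = 0 → q = 0 := by
  have hre : i.re = 0 := hi.1
  have hn : i.imI^2 + i.imJ^2 + i.imK^2 = 1 := by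
    have h := hi.normSq'
    rw [Quaternion.normSq_def', hre] at h
    linarith [h]
  by_cases hbc : i.imJ = 0 ∧ i.imK = 0
  · obtain ⟨hb, hc⟩ := hbc
    have ha : i.imI^2 = 1 := by linear_combination hn - i.imJ*hb - i.imK*hc
    refine ⟨⟨0,0,1,0⟩, fun q h0 h1 h2 h3 => ?_⟩
    erw [Quaternion.re_mul] at h2 h3
    simp only [Quaternion.re_mul, Quaternion.imI_mul, Quaternion.imJ_mul,
      Quaternion.imK_mul, hre, hb, hc, h0, zero_mul, mul_zero, one_mul, sub_zero,
      zero_sub, zero_add, add_zero, neg_eq_zero, mul_one, neg_zero, neg_mul] at h1 h2 h3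
    have hx : q.imI = 0 := by linear_combination i.imI * h1 - q.imI * ha
    have hz : q.imK = 0 := by linear_combination i.imI * h3 - q.imK * ha
    ext <;> simp [h0, hx, h2, hz, Quaternion.re_zero, Quaternion.imI_zero, Quaternion.imJ_zero, Quaternion.imK_zero]
  · refine ⟨⟨0,0,i.imK,-i.imJ⟩, fun q h0 h1 h2 h3 => ?_⟩
    have hs : i.imJ^2 + i.imK^2 > 0 := by
      rcases not_and_or.mp hbc with h | h
      · have : i.imJ^2 > 0 := by positivity
        nlinarith [sq_nonneg i.imK]
      · have : i.imK^2 > 0 := by positivity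
        nlinarith [sq_nonneg i.imJ]
    erw [Quaternion.re_mul] at h2 h3
    simp only [Quaternion.re_mul, Quaternion.imI_mul, Quaternion.imJ_mul,
      Quaternion.imK_mul, hre, h0, zero_mul, mul_zero, one_mul, sub_zero,
      zero_sub, zero_add, add_zero, neg_eq_zero, mul_one, neg_zero, neg_mul] at h1 h2 h3
    have hx : q.imI = 0 := by
      have key : (i.imJ^2 + i.imK^2 + i.imI^2) * q.imI = 0 := by
        linear_combination -h3 - i.imI * h1
      calc q.imI = (i.imJ^2 + i.imK^2 + i.imI^2) * q.imI := by
            linear_combination (-q.imI) * hn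
        _ = 0 := key
    have hy : q.imJ = 0 := by
      have key : (i.imJ^2 + i.imK^2) * q.imJ = 0 := by
        linear_combination (-i.imJ)*h1 + (-i.imK)*h2 - (i.imI*i.imJ)*hx
      rcases mul_eq_zero.mp key with h | h
      · exact absurd h hs.ne'
      · exact h
    have hz : q.imK = 0 := by
      have key : (i.imJ^2 + i.imK^2) * q.imK = 0 := by
        linear_combination (-i.imK)*h1 + (i.imJ)*h2 - (i.imI*i.imK)*hx
      rcases mul_eq_zero.mp key with h | h
      · exact absurd h hs.ne'
      · exact h
    ext <;> simp [h0, hx, hy, hz, Quaternion.re_zero, Quaternion.imI_zero, Quaternion.imJ_zero, Quaternion.imK_zero]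

lemma holo_eq {U : Set ℂ} (hU : IsOpen U) (hUc : IsPreconnected U)
    {F G : ℂ → ℍ} {i : ℍ} (hi : Sph2 i)
    (hF : ∀ z ∈ U, ∃ L : ℂ →L[ℝ] ℍ, HasFDerivAt F L z ∧ L Complex.I = i * L 1)
    (hG : ∀ z ∈ U, ∃ L : ℂ →L[ℝ] ℍ, HasFDerivAt G L z ∧ L Complex.I = i * L 1)
    {z₀ : ℂ} (hz₀ : z₀ ∈ U) (hfreq : ∃ᶠ z in nhdsWithin z₀ {z₀}ᶜ, F z = G z) :
    Set.EqOn F G U := by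
  obtain ⟨v, hv⟩ := sep hi
  have hi2 : i * i = -1 := hi.mul_self
  have key : ∀ (w : ℍ) (H : ℂ → ℍ),
      (∀ z ∈ U, ∃ L : ℂ →L[ℝ] ℍ, HasFDerivAt H L z ∧ L Complex.I = i * L 1) →
      DifferentiableOn ℂ (fun z => cmL i w (H z)) U := by
    intro w H hH z hz
    obtain ⟨L, hL, hcr⟩ := hH z hz
    have hcomp : HasFDerivAt (fun z => cmL i w (H z)) ((cmL i w).comp L) z :=
      ((cmL i w).hasFDerivAt).comp z hL
    refine (diffC hcomp ?_).differentiableWithinAt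
    simp only [ContinuousLinearMap.coe_comp', Function.comp_apply, cmL_apply, hcr]
    exact cm_i_mul i w (L 1) hi2
  have eqw : ∀ w : ℍ, Set.EqOn (fun z => cmL i w (F z)) (fun z => cmL i w (G z)) U := by
    intro w
    have aF := (key w F hF).analyticOnNhd hU
    have aG := (key w G hG).analyticOnNhd hU
    exact aF.eqOn_of_preconnected_of_frequently_eq aG hUc hz₀
      (hfreq.mono fun z hz => by rw [hz])
  intro z hz
  have h1 := eqw 1 hz
  have h2 := eqw v hz
  simp only [cmL_apply] at h1 h2
  have e1 : cm i 1 (F z - G z) = 0 := by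
    rw [show F z - G z = F z - G z from rfl]
    have := (cmL i 1).map_sub (F z) (G z)
    simp only [cmL_apply] at this
    rw [this, h1, sub_self]
  have e2 : cm i v (F z - G z) = 0 := by
    have := (cmL i v).map_sub (F z) (G z)
    simp only [cmL_apply] at this
    rw [this, h2, sub_self]
  rw [Complex.ext_iff] at e1 e2
  simp only [cm, Complex.zero_re, Complex.zero_im, neg_eq_zero, one_mul] at e1 e2
  have := hv (F z - G z) e1.1 e1.2 e2.1 e2.2
  exact sub_eq_zero.mp this

/-- the embedding `z ↦ z.re + z.im • u` as a real CLM. -/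
def Acl (u : ℍ) : ℂ →L[ℝ] ℍ :=
  (Complex.reCLM.smulRight (1:ℍ)) + (Complex.imCLM.smulRight u)

@[simp] lemma Acl_apply (u : ℍ) (z : ℂ) : Acl u z = (z.re : ℍ) + z.im • u := by
  simp only [Acl, ContinuousLinearMap.add_apply, ContinuousLinearMap.smulRight_apply,
    Complex.reCLM_apply, Complex.imCLM_apply]
  congr 1
  rw [← Quaternion.coe_one, Quaternion.smul_coe, mul_one]

lemma quat_id {i k : ℍ} (hi2 : i*i = -1) (hk2 : k*k = -1) (D E : ℍ) :
    (1 + i*k) * -(k*D) + (1 - i*k) * (k*E)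
      = i * ((1 + i*k) * D + (1 - i*k) * E) := by
  have e1 : ∀ X : ℍ, k*(k*X) = -X := fun X => by rw [← mul_assoc, hk2, neg_one_mul]
  have e2 : ∀ X : ℍ, i*(i*X) = -X := fun X => by rw [← mul_assoc, hi2, neg_one_mul]
  simp only [add_mul, sub_mul, mul_add, mul_sub, one_mul, mul_one, mul_neg, neg_mul,
    mul_assoc, e1, e2, neg_neg]
  abel

/-- derivative package for the slice-regular side. -/
lemma hasF_slice {Ω : Set ℍ} {f : ℍ → ℍ} (hreg : SliceRegularOn f Ω) {u : ℍ} (hu : Sph2 u)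
    {z : ℂ} (hz : ((z.re : ℍ) + z.im • u) ∈ Ω) :
    HasFDerivAt (fun w : ℂ => f ((w.re : ℍ) + w.im • u))
      ((fderiv ℝ f ((z.re : ℍ) + z.im • u)).comp (Acl u)) z ∧
    fderiv ℝ f ((z.re : ℍ) + z.im • u) u = u * fderiv ℝ f ((z.re : ℍ) + z.im • u) 1 := by
  obtain ⟨hdiff, hcr⟩ := hreg hu z.re z.im hz
  constructor
  · have hAz : Acl u z = (z.re:ℍ) + z.im • u := Acl_apply u z
    have h0 := hdiff.hasFDerivAt
    rw [← hAz] at h0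
    have h := h0.comp z (Acl u).hasFDerivAt
    rw [hAz] at h
    have hfun : (f ∘ Acl u) = fun w : ℂ => f ((w.re : ℍ) + w.im • u) := by
      funext w; simp only [Function.comp_apply, Acl_apply]
    exact hfun ▸ h
  · have hu2 : u * u = -1 := hu.mul_self
    have := congrArg (fun q => u * q) hcr
    simp only [mul_add, mul_zero] at this
    rw [← mul_assoc, hu2, neg_one_mul] at this
    have := add_eq_zero_iff_eq_neg.mp this
    rw [this]; simp

lemma sliceSet_indep {Ω : Set ℍ} (hΩ : AxSymSDomain Ω) {i k : ℍ} (hi : Sph2 i) (hk : Sph2 k) :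
    sliceSet Ω i = sliceSet Ω k := by
  ext p
  exact ⟨fun h => hΩ.axial p.1 p.2 hi h hk, fun h => hΩ.axial p.1 p.2 hk h hi⟩

lemma sliceSet_symm {Ω : Set ℍ} (hΩ : AxSymSDomain Ω) {k : ℍ} (hk : Sph2 k) {x y : ℝ}
    (h : (x, y) ∈ sliceSet Ω k) : (x, -y) ∈ sliceSet Ω k := by
  have h2 := hΩ.axial x y hk h hk.neg
  have : y • (-k) = (-y) • k := by rw [smul_neg, neg_smul]
  rw [this] at h2
  exact h2

lemma coe_two_q : ((2:ℝ):ℍ) = 2 := by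
  rw [show (2:ℝ) = 1+1 from by norm_num, Quaternion.coe_add, Quaternion.coe_one]
  norm_num

lemma rep {Ω : Set ℍ} (hΩ : AxSymSDomain Ω) {i k : ℍ} (hi : Sph2 i) (hk : Sph2 k)
    {f : ℍ → ℍ} (hreg : SliceRegularOn f Ω) {x y : ℝ} (hxy : (x, y) ∈ sliceSet Ω k) :
    f ((x:ℍ) + y • i)
      = (2⁻¹ : ℝ) • ((1 + i*k) * f ((x:ℍ) + (-y) • k) + (1 - i*k) * f ((x:ℍ) + y • k)) := by
  have hi2 := hi.mul_self
  have hk2 := hk.mul_self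
  set U : Set ℂ := {z | (z.re, z.im) ∈ sliceSet Ω k} with hUdef
  set F : ℂ → ℍ := fun z => f ((z.re:ℍ) + z.im • i) with hFdef
  set G : ℂ → ℍ := fun z => (2⁻¹:ℝ) • ((1 + i*k) * f ((z.re:ℍ) + (-z.im) • k)
      + (1 - i*k) * f ((z.re:ℍ) + z.im • k)) with hGdef
  have hUopen : IsOpen U := by
    have : U = Acl k ⁻¹' Ω := by
      ext z
      simp [hUdef, sliceSet, Acl_apply, Set.mem_setOf_eq]
    rw [this]
    exact hΩ.isOpen.preimage (Acl k).continuous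
  have hUconn : IsPreconnected U := by
    have hD : IsConnected (sliceSet Ω k) := hΩ.slice_connected hk
    have himg : (⇑Complex.equivRealProdCLM.symm '' (sliceSet Ω k)) = U := by
      ext z
      constructor
      · rintro ⟨p, hp, rfl⟩
        have h1 : (Complex.equivRealProdCLM.symm p).re = p.1 := by
          rw [Complex.equivRealProdCLM_symm_apply]; simp
        have h2 : (Complex.equivRealProdCLM.symm p).im = p.2 := by
          rw [Complex.equivRealProdCLM_symm_apply]; simp
        show (_, _) ∈ sliceSet Ω k
        rw [h1, h2]
        exact hp
      · intro hz
        refine ⟨(z.re, z.im), hz, ?_⟩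
        rw [Complex.equivRealProdCLM_symm_apply]
        exact Complex.re_add_im z
    have := hD.image (⇑Complex.equivRealProdCLM.symm)
      (Complex.equivRealProdCLM.symm.continuous.continuousOn)
    rw [himg] at this
    exact this.isPreconnected
  have hF : ∀ z ∈ U, ∃ L : ℂ →L[ℝ] ℍ, HasFDerivAt F L z ∧ L Complex.I = i * L 1 := by
    intro z hz
    have hzi : ((z.re:ℍ) + z.im • i) ∈ Ω := hΩ.axial z.re z.im hk hz hi
    obtain ⟨hder, hcr⟩ := hasF_slice hreg hi hzi
    refine ⟨_, hder, ?_⟩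
    simp only [ContinuousLinearMap.coe_comp', Function.comp_apply, Acl_apply,
      Complex.I_re, Complex.I_im, Complex.one_re, Complex.one_im, Complex.ofReal_zero,
      Complex.ofReal_one, Quaternion.coe_zero, Quaternion.coe_one, zero_add, one_smul,
      zero_smul, add_zero]
    exact hcr
  have hG : ∀ z ∈ U, ∃ L : ℂ →L[ℝ] ℍ, HasFDerivAt G L z ∧ L Complex.I = i * L 1 := by
    intro z hz
    -- plus point
    have hzp : ((z.re:ℍ) + z.im • k) ∈ Ω := hz
    obtain ⟨hderp, hcrp⟩ := hasF_slice hreg hk hzp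
    -- minus point, via conjugate
    set zc := (starRingEnd ℂ) z with hzc
    have hzcre : zc.re = z.re := Complex.conj_re z
    have hzcim : zc.im = -z.im := Complex.conj_im z
    have hzm' : (z.re, -z.im) ∈ sliceSet Ω k := sliceSet_symm hΩ hk hz
    have hzm : ((zc.re:ℍ) + zc.im • k) ∈ Ω := by rw [hzcre, hzcim]; exact hzm'
    obtain ⟨hderm, hcrm⟩ := hasF_slice hreg hk hzm
    -- conjugation as CLM
    have hconj : HasFDerivAt (fun w : ℂ => (starRingEnd ℂ) w)
        (Complex.conjCLE.toContinuousLinearMap) z :=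
      Complex.conjCLE.toContinuousLinearMap.hasFDerivAt
    have hcomp := hderm.comp z hconj
    have hfunm : ((fun w : ℂ => f ((w.re : ℍ) + w.im • k)) ∘ fun w : ℂ => (starRingEnd ℂ) w)
        = fun w : ℂ => f ((w.re:ℍ) + (-w.im) • k) := by
      funext w
      simp [Function.comp, Complex.conj_re, Complex.conj_im]
    rw [hfunm] at hcomp
    have h1 := hcomp.const_mul (1 + i*k)
    have h2 := hderp.const_mul (1 - i*k)
    have h3 := (h1.add h2).const_smul (2⁻¹:ℝ)
    refine ⟨_, h3, ?_⟩
    have e1 : Complex.conjCLE.toContinuousLinearMap Complex.I = -Complex.I := by simp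
    have e2 : Complex.conjCLE.toContinuousLinearMap 1 = 1 := by simp
    simp only [ContinuousLinearMap.coe_smul', Pi.smul_apply, ContinuousLinearMap.add_apply,
      ContinuousLinearMap.coe_comp', Function.comp_apply, ContinuousLinearMap.smul_apply,
      e1, e2, Acl_apply, Complex.I_re, Complex.I_im, Complex.one_re, Complex.one_im,
      Complex.neg_re, Complex.neg_im, Complex.ofReal_zero, Complex.ofReal_one, zero_add,
      one_smul, zero_smul, add_zero, neg_zero, neg_smul, smul_eq_mul,
      Quaternion.coe_zero, Quaternion.coe_one, map_neg]
    rw [hcrp, hcrm]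
    rw [mul_smul_comm]
    congr 1
    exact quat_id hi2 hk2 _ _
  -- base point on the real axis
  obtain ⟨q₀, hq₀Ω, x₀, rfl⟩ := hΩ.real_nonempty
  set z₀ : ℂ := (x₀ : ℂ) with hz₀def
  have hz₀U : z₀ ∈ U := by
    show ((z₀.re : ℍ) + z₀.im • k) ∈ Ω
    simp only [hz₀def, Complex.ofReal_re, Complex.ofReal_im, zero_smul, add_zero]
    exact hq₀Ω
  -- F and G agree on the real axis
  have hreal : ∀ z : ℂ, z.im = 0 → F z = G z := by
    intro z h0
    simp only [hFdef, hGdef, h0, neg_zero, zero_smul, add_zero]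
    have hco : (1 + i*k) + (1 - i*k) = ((2:ℝ):ℍ) := by
      rw [coe_two_q]
      abel_nf
      rw [two_smul]; norm_num
    have hsum : (1 + i*k) * f ((z.re:ℍ)) + (1 - i*k) * f ((z.re:ℍ))
        = ((2:ℝ):ℍ) * f ((z.re:ℍ)) := by
      rw [← add_mul, hco]
    rw [hsum, Quaternion.coe_mul_eq_smul, smul_smul]
    norm_num
  have hfreq : ∃ᶠ z in nhdsWithin z₀ {z₀}ᶜ, F z = G z := by
    have htend : Filter.Tendsto (fun n : ℕ => z₀ + ((1/(n+1) : ℝ) : ℂ)) Filter.atTop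
        (nhdsWithin z₀ {z₀}ᶜ) := by
      apply tendsto_nhdsWithin_of_tendsto_nhds_of_eventually_within
      · have h1 : Filter.Tendsto (fun n : ℕ => (1/(n+1) : ℝ)) Filter.atTop (nhds 0) :=
          tendsto_one_div_add_atTop_nhds_zero_nat
        have h2 : Filter.Tendsto (fun n : ℕ => ((1/(n+1) : ℝ) : ℂ)) Filter.atTop (nhds 0) := by
          have := h1.ofReal
          simpa using this
        have := h2.const_add z₀
        simpa using this
      · apply Filter.Eventually.of_forall
        intro n
        simp only [Set.mem_compl_iff, Set.mem_singleton_iff]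
        intro hcon
        have : ((1/(n+1) : ℝ) : ℂ) = 0 := by
          have := congrArg (fun w => w - z₀) hcon
          simpa using this
        rw [Complex.ofReal_eq_zero] at this
        have : (1 : ℝ) / (n+1) > 0 := by positivity
        simp_all
    apply htend.frequently
    apply Filter.Eventually.frequently
    apply Filter.Eventually.of_forall
    intro n
    apply hreal
    simp [hz₀def]
  have heqon : Set.EqOn F G U := holo_eq hUopen hUconn hi hF hG hz₀U hfreq
  have hzxy : (⟨x, y⟩ : ℂ) ∈ U := hxy
  have := heqon hzxy
  exact this

lemma norm_bound {Ω : Set ℍ} (hΩ : AxSymSDomain Ω) {i k : ℍ} (hi : Sph2 i) (hk : Sph2 k)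
    {f : ℍ → ℍ} (hreg : SliceRegularOn f Ω) {x y : ℝ} (hxy : (x, y) ∈ sliceSet Ω k) :
    ‖f ((x:ℍ) + y • i)‖^2 ≤ ‖f ((x:ℍ) + y • k)‖^2 + ‖f ((x:ℍ) + (-y) • k)‖^2 := by
  have hrep := rep hΩ hi hk hreg hxy
  set a := ‖f ((x:ℍ) + y • k)‖ with ha
  set b := ‖f ((x:ℍ) + (-y) • k)‖ with hb
  set s := ‖(1 + i*k : ℍ)‖ with hs
  set t := ‖(1 - i*k : ℍ)‖ with ht
  have h4 : s^2 + t^2 = 4 := by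
    have e1 : s^2 = Quaternion.normSq (1 + i*k) := by
      rw [hs, sq, ← Quaternion.normSq_eq_norm_mul_self]
    have e2 : t^2 = Quaternion.normSq (1 - i*k) := by
      rw [ht, sq, ← Quaternion.normSq_eq_norm_mul_self]
    have e3 : Quaternion.normSq (i*k) = 1 := by
      rw [map_mul, hi.normSq', hk.normSq', mul_one]
    rw [e1, e2]
    rw [Quaternion.normSq_def', Quaternion.normSq_def'] at *
    simp only [Quaternion.re_add, Quaternion.imI_add, Quaternion.imJ_add, Quaternion.imK_add,
      Quaternion.re_sub, Quaternion.imI_sub, Quaternion.imJ_sub, Quaternion.imK_sub,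
      Quaternion.re_one, Quaternion.imI_one, Quaternion.imJ_one, Quaternion.imK_one] at *
    nlinarith [e3]
  have hN : ‖f ((x:ℍ) + y • i)‖ ≤ 2⁻¹ * (s * b + t * a) := by
    rw [hrep]
    calc ‖(2⁻¹:ℝ) • ((1 + i*k) * f ((x:ℍ) + (-y) • k) + (1 - i*k) * f ((x:ℍ) + y • k))‖
        = 2⁻¹ * ‖(1 + i*k) * f ((x:ℍ) + (-y) • k) + (1 - i*k) * f ((x:ℍ) + y • k)‖ := by
          rw [norm_smul]; norm_num
      _ ≤ 2⁻¹ * (‖(1 + i*k) * f ((x:ℍ) + (-y) • k)‖ + ‖(1 - i*k) * f ((x:ℍ) + y • k)‖) := by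
          have := norm_add_le ((1 + i*k) * f ((x:ℍ) + (-y) • k)) ((1 - i*k) * f ((x:ℍ) + y • k))
          linarith
      _ = 2⁻¹ * (s * b + t * a) := by rw [norm_mul, norm_mul]
  have hN0 : (0:ℝ) ≤ ‖f ((x:ℍ) + y • i)‖ := norm_nonneg _
  have ha0 : (0:ℝ) ≤ a := norm_nonneg _
  have hb0 : (0:ℝ) ≤ b := norm_nonneg _
  have hs0 : (0:ℝ) ≤ s := norm_nonneg _
  have ht0 : (0:ℝ) ≤ t := norm_nonneg _
  nlinarith [sq_nonneg (s*a - t*b), hN, h4, sq_nonneg (s*b + t*a)]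

lemma transfer {Ω : Set ℍ} (hΩ : AxSymSDomain Ω) {i k : ℍ} (hi : Sph2 i) (hk : Sph2 k)
    {f : ℍ → ℍ} (hf : MemBergman Ω k f) :
    MemBergman Ω i f ∧ bergmanNormSq Ω i f ≤ 2 * bergmanNormSq Ω k f := by
  obtain ⟨hreg, hint⟩ := hf
  set S := sliceSet Ω k with hSdef
  have hSi : sliceSet Ω i = S := sliceSet_indep hΩ hi hk
  have hSopen : IsOpen S := by
    have hc : Continuous (fun p : ℝ × ℝ => (p.1:ℍ) + p.2 • k) :=
      (Quaternion.continuous_coe.comp continuous_fst).add (continuous_snd.smul continuous_const)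
    exact hΩ.isOpen.preimage hc
  set T : ℝ × ℝ → ℝ × ℝ := fun p => (p.1, -p.2) with hTdef
  have hT : MeasurePreserving T volume volume := by
    have := (MeasurePreserving.id (volume : Measure ℝ)).prod
      (Measure.measurePreserving_neg (volume : Measure ℝ))
    exact this
  have hTemb : MeasurableEmbedding T := by
    have := ((Homeomorph.refl ℝ).prodCongr (Homeomorph.neg ℝ)).toMeasurableEquiv.measurableEmbedding
    exact this
  have hTS : T ⁻¹' S = S := by
    ext p
    constructor
    · intro h
      have := sliceSet_symm hΩ hk (x := p.1) (y := -p.2) h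
      simpa using this
    · intro h
      exact sliceSet_symm hΩ hk h
  set gk : ℝ × ℝ → ℝ := fun p => ‖f ((p.1:ℍ) + p.2 • k)‖^2 with hgk
  set gi : ℝ × ℝ → ℝ := fun p => ‖f ((p.1:ℍ) + p.2 • i)‖^2 with hgi
  have hint' : IntegrableOn (fun p => gk (T p)) S := by
    have := (hT.integrableOn_comp_preimage hTemb (s := S) (f := gk)).mpr hint
    rwa [hTS] at this
  have hbound : ∀ p ∈ S, gi p ≤ gk p + gk (T p) := by
    intro p hp
    exact norm_bound hΩ hi hk hreg hp
  have haesm : AEStronglyMeasurable gi (volume.restrict S) := by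
    have hciS : ContinuousOn (fun p : ℝ×ℝ => f ((p.1:ℍ) + p.2 • i)) S := by
      intro p hp
      have hmem : ((p.1:ℍ) + p.2 • i) ∈ Ω := hΩ.axial p.1 p.2 hk hp hi
      have hd := (hreg hi p.1 p.2 hmem).1
      have hc : Continuous (fun p : ℝ × ℝ => (p.1:ℍ) + p.2 • i) :=
        (Quaternion.continuous_coe.comp continuous_fst).add (continuous_snd.smul continuous_const)
      have hd' : ContinuousAt f ((fun p : ℝ×ℝ => (p.1:ℍ) + p.2 • i) p) := hd.continuousAt
      have hcc : ContinuousAt (f ∘ (fun p : ℝ×ℝ => (p.1:ℍ) + p.2 • i)) p :=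
        ContinuousAt.comp hd' hc.continuousAt
      exact hcc.continuousWithinAt
    exact ((hciS.norm.pow 2).aestronglyMeasurable hSopen.measurableSet)
  have hgi_int : IntegrableOn gi S := by
    apply Integrable.mono' (hint.add hint') haesm
    rw [ae_restrict_iff' hSopen.measurableSet]
    apply Filter.Eventually.of_forall
    intro p hp
    rw [Real.norm_eq_abs, abs_of_nonneg (by positivity)]
    exact hbound p hp
  have hle : ∫ p in S, gi p ≤ ∫ p in S, (gk p + gk (T p)) :=
    setIntegral_mono_on hgi_int (hint.add hint') hSopen.measurableSet hbound
  have hsplit : ∫ p in S, (gk p + gk (T p)) = (∫ p in S, gk p) + ∫ p in S, gk (T p) :=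
    integral_add hint hint'
  have hTeq : ∫ p in S, gk (T p) = ∫ p in S, gk p := by
    have := hT.setIntegral_preimage_emb hTemb gk S
    rwa [hTS] at this
  constructor
  · exact ⟨hreg, by rw [hSi]; exact hgi_int⟩
  · have : bergmanNormSq Ω i f = ∫ p in S, gi p := by
      rw [bergmanNormSq, hSi]
    rw [this, bergmanNormSq]
    have : (∫ p in S, gk p) = ∫ p in sliceSet Ω k, ‖f ((p.1 : ℍ) + p.2 • k)‖ ^ 2 := rfl
    rw [← this]
    linarith [hle, hsplit, hTeq]


/-- If `f ∈ A_k(Ω)` then `f ∈ A_i(Ω)` with `‖f‖_{A_i} ≤ √2 ‖f‖_{A_k}`; consequently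
`A_i(Ω)` and `A_k(Ω)` coincide as sets of functions (with equivalent norms). -/
theorem bergman_slices_equivalent (Ω : Set ℍ) (hΩ : AxSymSDomain Ω)
    (i k : ℍ) (hi : Sph2 i) (hk : Sph2 k)
    (f : ℍ → ℍ) (hf : MemBergman Ω k f) :
    MemBergman Ω i f ∧
    bergmanNorm Ω i f ≤ Real.sqrt 2 * bergmanNorm Ω k f ∧
    (∀ g : ℍ → ℍ, MemBergman Ω i g ↔ MemBergman Ω k g) := by
  obtain ⟨hmem, hsq⟩ := transfer hΩ hi hk hf
  refine ⟨hmem, ?_, fun g => ⟨fun hg => (transfer hΩ hk hi hg).1,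
    fun hg => (transfer hΩ hi hk hg).1⟩⟩
  rw [bergmanNorm, bergmanNorm, ← Real.sqrt_mul (by norm_num : (0:ℝ) ≤ 2)]
  exact Real.sqrt_le_sqrt hsq
end
end

section
/- Let Ω ⊆ ℍ be an axially symmetric s-domain and (i,j) a pair of orthogonal pure imaginary unit quaternions. Then P_{i,j} ∘ Q_{i,j} is the identity on the slice regular functions on Ω, and Q_{i,j} ∘ P_{i,j} is the identity on Hol(Ω_i) + Hol(Ω_i)j. Explicitly: (a) for every slice regular f : Ω → ℍ and every q = x + I_q y ∈ Ω (x, y ∈ ℝ, I_q ∈ 𝕊²), ½[(1 + I_q i) f(x − y i) + (1 − I_q i) f(x + y i)] = f(q); (b) for every g = g₁ + g₂ j with g₁, g₂ holomorphic on Ω_i = Ω ∩ ℂ(i) (with values in ℂ(i)), the restriction of P_{i,j}[g] to Ω_i equals g, where P_{i,j}[g](x + I_q y) := ½[(1 + I_q i) g(x − y i) + (1 − I_q i) g(x + y i)]. -/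
noncomputable section

open MeasureTheory Filter

lemma sph2_mul_self {k : ℍ} (hk : Sph2 k) : k * k = -1 := by
  have h1 : star k = -k := by ext <;> simp [hk.1]
  have h2 : k * star k = ((Quaternion.normSq k : ℝ) : ℍ) := Quaternion.self_mul_star k
  have h3 : Quaternion.normSq k = 1 := by
    rw [Quaternion.normSq_eq_norm_mul_self, hk.2, one_mul]
  rw [h1, h3] at h2
  simpa [neg_eq_iff_eq_neg] using h2

lemma sph2_neg_s7 {k : ℍ} (hk : Sph2 k) : Sph2 (-k) := ⟨by simp [hk.1], by simp [hk.2]⟩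

lemma sph2_star {k : ℍ} (hk : Sph2 k) : star k = -k := by ext <;> simp [hk.1]

section lift
variable {I : ℍ} (hI : Sph2 I)

noncomputable def phiH (I : ℍ) (hI : Sph2 I) : ℂ →ₐ[ℝ] ℍ := Complex.liftAux I (sph2_mul_self hI)

lemma phiH_apply (z : ℂ) : phiH I hI z = (z.re : ℍ) + z.im • I := by
  simp only [phiH, Complex.liftAux_apply]
  rfl

lemma phiH_norm (z : ℂ) : ‖phiH I hI z‖ = ‖z‖ := by
  have hstar : star (phiH I hI z) = phiH I hI (starRingEnd ℂ z) := by
    rw [phiH_apply, phiH_apply]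
    simp [sph2_star hI, sub_eq_add_neg]
  have h2 : phiH I hI z * star (phiH I hI z) = ((Complex.normSq z : ℝ) : ℍ) := by
    rw [hstar, ← map_mul, Complex.mul_conj]
    simp [phiH_apply]
  have h3 := Quaternion.self_mul_star (phiH I hI z)
  rw [h2] at h3
  have h4 : Quaternion.normSq (phiH I hI z) = Complex.normSq z :=
    Quaternion.coe_injective h3.symm
  have := Quaternion.normSq_eq_norm_mul_self (a := phiH I hI z)
  rw [h4] at this
  have h5 : Complex.normSq z = ‖z‖ * ‖z‖ := by
    rw [Complex.normSq_eq_norm_sq]; ring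
  nlinarith [norm_nonneg (phiH I hI z), norm_nonneg z]
end lift

lemma key_alg (I i u v w : ℍ) (hI2 : I*I = -1) (hii : i*i = -1) :
    I * ((2⁻¹:ℝ) • ((1+I*i)*(-(i*u)) + (1-I*i)*(-(i*v))) - (-(I*w)))
      = (2⁻¹:ℝ) • ((1+I*i) * (-u) + (1-I*i) * v) - w := by
  have h1 : I * ((1+I*i)*(-(i*u))) = (1+I*i) * (-u) := by
    calc I * ((1+I*i)*(-(i*u))) = (I + (I*I)*i) * (-(i*u)) := by noncomm_ring
    _ = (I - i) * (-(i*u)) := by rw [hI2]; noncomm_ring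
    _ = -((I*i)*u) + (i*i)*u := by noncomm_ring
    _ = -((I*i)*u) + (-1)*u := by rw [hii]
    _ = (1+I*i) * (-u) := by noncomm_ring
  have h2 : I * ((1-I*i)*(-(i*v))) = (1-I*i) * v := by
    calc I * ((1-I*i)*(-(i*v))) = (I - (I*I)*i) * (-(i*v)) := by noncomm_ring
    _ = (I + i) * (-(i*v)) := by rw [hI2]; noncomm_ring
    _ = -((I*i)*v) - (i*i)*v := by noncomm_ring
    _ = -((I*i)*v) - (-1)*v := by rw [hii]
    _ = (1-I*i) * v := by noncomm_ring
  have h3 : I * (-(I*w)) = w := by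
    calc I * (-(I*w)) = -((I*I)*w) := by noncomm_ring
    _ = w := by rw [hI2]; noncomm_ring
  rw [mul_sub, mul_smul_comm, mul_add, h1, h2, h3]

set_option maxHeartbeats 2000000 in
theorem rep_formula {Ω : Set ℍ} (hΩ : AxSymSDomain Ω) {i : ℍ} (hi : Sph2 i)
    (f : ℍ → ℍ) (hf : SliceRegularOn f Ω)
    (x y : ℝ) (I : ℍ) (hI : Sph2 I) (hq : ((x : ℍ) + y • I) ∈ Ω) :
    (2⁻¹ : ℝ) • ((1 + I * i) * f ((x : ℍ) - y • i) + (1 - I * i) * f ((x : ℍ) + y • i))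
      = f ((x : ℍ) + y • I) := by
  have hI2 := sph2_mul_self hI
  have hii := sph2_mul_self hi
  have hni : Sph2 (-i) := sph2_neg_s7 hi
  letI : Module ℂ ℍ := Module.compHom ℍ (phiH I hI).toRingHom
  have hsmul : ∀ (z : ℂ) (q : ℍ), z • q = phiH I hI z * q := fun z q => rfl
  letI : IsScalarTower ℝ ℂ ℍ :=
    ⟨fun r z q => by rw [hsmul, hsmul, _root_.map_smul, smul_mul_assoc]⟩
  letI : NormedSpace ℂ ℍ :=
    { norm_smul_le := fun z q => by rw [hsmul, norm_mul, phiH_norm hI] }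
  -- the slice as a subset of ℂ
  set U : Set ℂ := {z : ℂ | ((z.re : ℍ) + z.im • I) ∈ Ω} with hU
  have hmap : Continuous fun z : ℂ => ((z.re : ℍ) + z.im • I) :=
    (Quaternion.continuous_coe.comp Complex.continuous_re).add
      (Complex.continuous_im.smul continuous_const)
  have hUopen : IsOpen U := hΩ.isOpen.preimage hmap
  have hUconn : IsPreconnected U := by
    have h1 : IsConnected {p : ℝ × ℝ | ((p.1 : ℍ) + p.2 • I) ∈ Ω} := hΩ.slice_connected hI
    have h2 : U = (fun p : ℝ × ℝ => (p.1 : ℂ) + p.2 * Complex.I) ''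
        {p : ℝ × ℝ | ((p.1 : ℍ) + p.2 • I) ∈ Ω} := by
      ext z
      constructor
      · intro hz
        exact ⟨(z.re, z.im), hz, by simp [Complex.re_add_im]⟩
      · rintro ⟨p, hp, rfl⟩
        show ((((p.1:ℂ) + p.2 * Complex.I).re : ℝ) : ℍ)
            + ((p.1:ℂ) + p.2 * Complex.I).im • I ∈ Ω
        simpa using hp
    rw [h2]
    exact (h1.image _ (by fun_prop)).isPreconnected
  -- the affine slice maps
  have coe_smul_one : ∀ r : ℝ, r • (1:ℍ) = (r:ℍ) := fun r => by rw [← Quaternion.coe_mul_eq_smul, mul_one]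
  set e : ℍ → (ℂ →L[ℝ] ℍ) := fun c => Complex.reCLM.smulRight (1:ℍ) + Complex.imCLM.smulRight c
    with he
  have he_apply : ∀ (c : ℍ) (z : ℂ), e c z = (z.re : ℍ) + z.im • c := by
    intro c z
    simp [he, coe_smul_one]
  have he_one : ∀ c : ℍ, e c 1 = 1 := fun c => by rw [he_apply]; simp
  have he_I : ∀ c : ℍ, e c Complex.I = c := fun c => by rw [he_apply]; simp
  -- the difference function
  set H : ℂ → ℍ := fun z =>
    (2⁻¹ : ℝ) • ((1 + I * i) * f (e (-i) z) + (1 - I * i) * f (e i z)) - f (e I z) with hHdef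
  -- complex differentiability
  have hdiffC : DifferentiableOn ℂ H U := by
    intro z hz
    have hm1 : ((z.re:ℍ) + z.im • (-i)) ∈ Ω := hΩ.axial z.re z.im hI hz hni
    have hm2 : ((z.re:ℍ) + z.im • i) ∈ Ω := hΩ.axial z.re z.im hI hz hi
    have hda := hf hni z.re z.im hm1
    have hdb := hf hi z.re z.im hm2
    have hdc := hf hI z.re z.im hz
    rw [← he_apply] at hda hdb hdc
    set A := fderiv ℝ f (e (-i) z) with hA
    set B := fderiv ℝ f (e i z) with hB
    set C := fderiv ℝ f (e I z) with hC
    have h1 : HasFDerivAt (fun w => f (e (-i) w)) (A.comp (e (-i))) z :=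
      hda.1.hasFDerivAt.comp z (e (-i)).hasFDerivAt
    have h2 : HasFDerivAt (fun w => f (e i w)) (B.comp (e i)) z :=
      hdb.1.hasFDerivAt.comp z (e i).hasFDerivAt
    have h3 : HasFDerivAt (fun w => f (e I w)) (C.comp (e I)) z :=
      hdc.1.hasFDerivAt.comp z (e I).hasFDerivAt
    set L : ℂ →L[ℝ] ℍ :=
      (2⁻¹:ℝ) • ((1+I*i) • (A.comp (e (-i))) + (1-I*i) • (B.comp (e i))) - C.comp (e I) with hL
    have hHr : HasFDerivAt H L z :=
      (((h1.const_mul (1+I*i)).add (h2.const_mul (1-I*i))).const_smul (2⁻¹:ℝ)).sub h3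
    -- Cauchy-Riemann relations
    have crA : A 1 = -(i * A i) := by
      have h := hda.2
      rw [map_neg, neg_mul_neg] at h
      exact eq_neg_of_add_eq_zero_left h
    have crB : B 1 = -(i * B i) := eq_neg_of_add_eq_zero_left hdb.2
    have crC : C 1 = -(I * C I) := eq_neg_of_add_eq_zero_left hdc.2
    -- evaluate L
    have hL1 : L 1 = (2⁻¹:ℝ) • ((1+I*i) * (-(i * A i)) + (1-I*i) * (-(i * B i))) - (-(I * C I)) := by
      simp only [hL, ContinuousLinearMap.sub_apply, ContinuousLinearMap.smul_apply,
        ContinuousLinearMap.add_apply, ContinuousLinearMap.comp_apply, he_one,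
        smul_eq_mul, crA, crB, crC]
    have hLI : L Complex.I = (2⁻¹:ℝ) • ((1+I*i) * (-(A i)) + (1-I*i) * (B i)) - C I := by
      simp only [hL, ContinuousLinearMap.sub_apply, ContinuousLinearMap.smul_apply,
        ContinuousLinearMap.add_apply, ContinuousLinearMap.comp_apply, he_I,
        smul_eq_mul, map_neg]
    have hkey : L Complex.I = I * L 1 := by
      rw [hL1, hLI, key_alg I i (A i) (B i) (C I) hI2 hii]
    -- upgrade to a complex derivative
    set L' : ℂ →L[ℂ] ℍ := ContinuousLinearMap.smulRight (1 : ℂ →L[ℂ] ℂ) (L 1) with hL'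
    have hres : L'.restrictScalars ℝ = L := by
      apply ContinuousLinearMap.ext
      intro w
      have hw : w = w.re • (1:ℂ) + w.im • Complex.I := by
        apply Complex.ext <;> simp
      have lhs : (L'.restrictScalars ℝ) w = w • L 1 := by
        simp [hL']
      rw [lhs, hsmul, phiH_apply, add_mul, Quaternion.coe_mul_eq_smul, smul_mul_assoc, ← hkey]
      conv_rhs => rw [hw, L.map_add, L.map_smul, L.map_smul]
    have hHc : HasFDerivAt H L' z := hasFDerivAt_of_restrictScalars ℝ hHr hres
    exact hHc.differentiableAt.differentiableWithinAt
  -- H is analytic on U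
  have hAn : AnalyticOnNhd ℂ H U := hdiffC.analyticOnNhd hUopen
  -- H vanishes on the reals near a real point of Ω
  obtain ⟨q₀, hq₀Ω, x₀, rfl⟩ : ∃ q₀ ∈ Ω, ∃ x₀ : ℝ, (x₀ : ℍ) = q₀ := by
    obtain ⟨q₀, hq₀⟩ := hΩ.real_nonempty
    obtain ⟨x₀, hx₀⟩ := hq₀.2
    exact ⟨q₀, hq₀.1, x₀, hx₀⟩
  have hz₀U : ((x₀ : ℝ) : ℂ) ∈ U := by
    show (((x₀:ℂ).re : ℝ) : ℍ) + ((x₀:ℂ).im) • I ∈ Ω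
    simpa using hq₀Ω
  have hHreal : ∀ t : ℝ, (t : ℍ) ∈ Ω → H (t : ℂ) = 0 := by
    intro t ht
    have het : ∀ c : ℍ, e c (t : ℂ) = (t : ℍ) := by
      intro c
      rw [he_apply]
      simp
    rw [hHdef]
    simp only [het]
    have h2 : (1 + I * i) * f (t:ℍ) + (1 - I * i) * f (t:ℍ) = f (t:ℍ) + f (t:ℍ) := by
      noncomm_ring
    rw [h2, smul_add, ← add_smul]
    have h3 : (2⁻¹ + 2⁻¹ : ℝ) = 1 := by norm_num
    rw [h3, one_smul, sub_self]
  have hfreq : ∃ᶠ z in nhdsWithin ((x₀:ℝ):ℂ) {((x₀:ℝ):ℂ)}ᶜ, H z = 0 := by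
    rw [Metric.nhdsWithin_basis_ball.frequently_iff]
    rintro δ hδ
    obtain ⟨ε, hε, hball⟩ := Metric.isOpen_iff.1 hΩ.isOpen _ hq₀Ω
    set r := min δ ε / 2 with hr
    have hrpos : 0 < r := by positivity
    have hmin : 0 < min δ ε := lt_min hδ hε
    have hrδ : r < δ := by
      have := min_le_left δ ε
      rw [hr]; linarith
    have hrε : r < ε := by
      have := min_le_right δ ε
      rw [hr]; linarith
    refine ⟨((x₀ + r : ℝ) : ℂ), ⟨?_, ?_⟩, ?_⟩
    · rw [Metric.mem_ball]
      have hd : dist ((x₀ + r : ℝ) : ℂ) ((x₀:ℝ):ℂ) = |r| := by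
        rw [dist_eq_norm, show ((x₀ + r : ℝ) : ℂ) - ((x₀:ℝ):ℂ) = ((r:ℝ):ℂ) by rw [Complex.ofReal_add, add_sub_cancel_left],
          Complex.norm_real, Real.norm_eq_abs]
      rw [hd, abs_of_pos hrpos]
      exact hrδ
    · simp only [Set.mem_compl_iff, Set.mem_singleton_iff]
      intro hcon
      have : (x₀ + r : ℝ) = x₀ := by exact_mod_cast hcon
      linarith
    · apply hHreal
      apply hball
      rw [Metric.mem_ball]
      have hd : dist ((x₀ + r : ℝ) : ℍ) ((x₀:ℝ):ℍ) = |r| := by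
        rw [dist_eq_norm, show ((x₀ + r : ℝ) : ℍ) - ((x₀:ℝ):ℍ) = ((r:ℝ):ℍ) by rw [Quaternion.coe_add, add_sub_cancel_left],
          Quaternion.norm_coe, Real.norm_eq_abs]
      rw [hd, abs_of_pos hrpos]
      exact hrε
  have hzero : Set.EqOn H 0 U :=
    hAn.eqOn_zero_of_preconnected_of_frequently_eq_zero hUconn hz₀U hfreq
  -- conclude
  have hzU : (⟨x, y⟩ : ℂ) ∈ U := by
    show (((⟨x,y⟩:ℂ).re : ℝ) : ℍ) + ((⟨x,y⟩:ℂ).im) • I ∈ Ω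
    exact hq
  have := hzero hzU
  rw [hHdef] at this
  simp only at this
  have hxy : ∀ c : ℍ, e c (⟨x, y⟩ : ℂ) = (x : ℍ) + y • c := fun c => by rw [he_apply]
  rw [hxy, hxy, hxy] at this
  have := sub_eq_zero.1 this
  rw [← this]
  congr 2
  rw [smul_neg, sub_eq_add_neg]

/-- `P_{i,j} ∘ Q_{i,j}` is the identity on the slice regular functions on `Ω`, and
`Q_{i,j} ∘ P_{i,j}` is the identity on `Hol(Ω_i) + Hol(Ω_i) j`. -/
theorem P_Q_identities (Ω : Set ℍ) (hΩ : AxSymSDomain Ω)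
    (i j : ℍ) (hij : OrthPair i j) :
    (∀ f : ℍ → ℍ, SliceRegularOn f Ω →
      ∀ (x y : ℝ) (I : ℍ), Sph2 I → ((x : ℍ) + y • I) ∈ Ω →
        (2⁻¹ : ℝ) • ((1 + I * i) * f ((x : ℍ) - y • i)
            + (1 - I * i) * f ((x : ℍ) + y • i))
          = f ((x : ℍ) + y • I)) ∧
    (∀ g g₁ g₂ : ℍ → ℍ,
      (∀ z ∈ Ω ∩ CC i,
        g₁ z ∈ CC i ∧ g₂ z ∈ CC i ∧
        DifferentiableAt ℝ g₁ z ∧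
        fderiv ℝ g₁ z 1 + i * fderiv ℝ g₁ z i = 0 ∧
        DifferentiableAt ℝ g₂ z ∧
        fderiv ℝ g₂ z 1 + i * fderiv ℝ g₂ z i = 0 ∧
        g z = g₁ z + g₂ z * j) →
      ∀ x y : ℝ, ((x : ℍ) + y • i) ∈ Ω →
        (2⁻¹ : ℝ) • ((1 + i * i) * g ((x : ℍ) - y • i)
            + (1 - i * i) * g ((x : ℍ) + y • i))
          = g ((x : ℍ) + y • i)) := by
  constructor
  · intro f hf x y I hI hqm
    exact rep_formula hΩ hij.1 f hf x y I hI hqm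
  · intro g g₁ g₂ _hg x y _hxy
    have hii : i * i = -1 := sph2_mul_self hij.1
    rw [hii]
    have h1 : (1 + (-1:ℍ)) * g ((x:ℍ) - y • i) = 0 := by noncomm_ring
    have h2 : (1 - (-1:ℍ)) * g ((x:ℍ) + y • i)
        = g ((x:ℍ) + y • i) + g ((x:ℍ) + y • i) := by noncomm_ring
    rw [h1, h2, zero_add, smul_add, ← add_smul]
    have h3 : (2⁻¹ + 2⁻¹ : ℝ) = 1 := by norm_num
    rw [h3, one_smul]
end
end

section
/- Let (k,l) be a pair of orthogonal pure imaginary unit quaternions and let (a,b) and (c,d) be pairs of real-valued conjugate harmonic functions on the unit disk D with finite L²(D) norms. Then the function P_{k,l}[a + bk + cl + dkl] is slice regular on 𝔹⁴. -/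
noncomputable section

open MeasureTheory Filter

namespace PextAux
open Topology

/-! ### Basic quaternion lemmas -/

lemma coe_eq_smul_one (r : ℝ) : (r : ℍ) = r • (1:ℍ) := by rw [← Algebra.algebraMap_eq_smul_one]; rfl

lemma im_eq_self {i : ℍ} (h : i.re = 0) : i.im = i := by
  conv_rhs => rw [← Quaternion.re_add_im i]
  simp [h]

lemma mul_self_of_sph2 {i : ℍ} (h : Sph2 i) : i * i = -1 := by
  have hs : star i = -i := Quaternion.star_eq_neg.2 h.1
  have hmul : star i * i = Quaternion.normSq i := Quaternion.star_mul_self i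
  have hn : (Quaternion.normSq i : ℝ) = 1 := by
    have := Quaternion.normSq_eq_norm_mul_self i
    rw [this, h.2, one_mul]
  rw [hs, neg_mul] at hmul
  rw [← neg_neg (i*i), hmul, hn]
  norm_num

lemma norm_sq_decomp (q : ℍ) : ‖q‖^2 = q.re^2 + ‖q.im‖^2 := by
  have h1 : ‖q‖^2 = Quaternion.normSq q := by rw [sq, ← Quaternion.normSq_eq_norm_mul_self]
  have h2 : ‖q.im‖^2 = Quaternion.normSq q.im := by
    rw [sq, ← Quaternion.normSq_eq_norm_mul_self]
  rw [h1, h2, Quaternion.normSq_def', Quaternion.normSq_def']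
  simp [pow_two]
  ring

lemma abs_re_le_norm (q : ℍ) : |q.re| ≤ ‖q‖ := by
  have h := norm_sq_decomp q
  nlinarith [sq_nonneg ‖q.im‖, norm_nonneg q, abs_nonneg q.re, sq_abs q.re]

lemma norm_im_le_norm (q : ℍ) : ‖q.im‖ ≤ ‖q‖ := by
  have h := norm_sq_decomp q
  nlinarith [sq_nonneg q.re, norm_nonneg q, norm_nonneg q.im]

lemma norm_Imu (q : ℍ) : ‖Imu q‖ = 1 := by
  by_cases h : q.im = 0
  · have h3 : ‖Imu q‖ * ‖Imu q‖ = Quaternion.normSq (Imu q) :=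
      (Quaternion.normSq_eq_norm_mul_self _).symm
    have h4 : Quaternion.normSq (Imu q) = 1 := by
      rw [Quaternion.normSq_def']
      simp [Imu, h]
    nlinarith [norm_nonneg (Imu q)]
  · rw [show Imu q = ‖q.im‖⁻¹ • q.im from if_neg h, norm_smul, Real.norm_eq_abs, abs_inv, abs_norm]
    exact inv_mul_cancel₀ (norm_ne_zero_iff.2 h)

lemma smul_Imu (q : ℍ) : ‖q.im‖ • Imu q = q.im := by
  by_cases h : q.im = 0
  · rw [h, norm_zero, zero_smul]
  · rw [show Imu q = ‖q.im‖⁻¹ • q.im from if_neg h, smul_smul, mul_inv_cancel₀ (norm_ne_zero_iff.2 h), one_smul]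

/-! ### Continuous linear maps -/

def reL : ℍ →ₗ[ℝ] ℝ where
  toFun q := q.re
  map_add' := by simp
  map_smul' := by simp
def reCLM : ℍ →L[ℝ] ℝ := reL.toContinuousLinearMap
def imL : ℍ →ₗ[ℝ] ℍ where
  toFun q := q.im
  map_add' := by simp
  map_smul' := by simp
def imCLM : ℍ →L[ℝ] ℍ := imL.toContinuousLinearMap
@[simp] lemma reCLM_apply (q : ℍ) : reCLM q = q.re := rfl
@[simp] lemma imCLM_apply (q : ℍ) : imCLM q = q.im := rfl

def slL (i : ℍ) : (ℝ × ℝ) →ₗ[ℝ] ℍ where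
  toFun p := (p.1 : ℍ) + p.2 • i
  map_add' p q := by
    simp only [Prod.fst_add, Prod.snd_add, Quaternion.coe_add, add_smul]; abel
  map_smul' r p := by
    simp only [Prod.smul_fst, Prod.smul_snd, Quaternion.coe_smul, smul_smul, smul_add,
      RingHom.id_apply, smul_eq_mul]
    rw [show ((r * p.1 : ℝ) : ℍ) = r • (p.1:ℍ) by rw [← smul_eq_mul, Quaternion.coe_smul]]
def slCLM (i : ℍ) : (ℝ × ℝ) →L[ℝ] ℍ := (slL i).toContinuousLinearMap
@[simp] lemma slCLM_apply (i : ℍ) (p : ℝ × ℝ) : slCLM i p = (p.1 : ℍ) + p.2 • i := rfl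

def sgL : (ℝ × ℝ) →ₗ[ℝ] (ℝ × ℝ) where
  toFun p := (p.1, -p.2)
  map_add' p q := by simp [Prod.ext_iff]; ring
  map_smul' r p := by simp [Prod.ext_iff]
def sgCLM : (ℝ × ℝ) →L[ℝ] (ℝ × ℝ) := sgL.toContinuousLinearMap
@[simp] lemma sgCLM_apply (p : ℝ × ℝ) : sgCLM p = (p.1, -p.2) := rfl

def mulCLM (c : ℍ) : ℍ →L[ℝ] ℍ := (ContinuousLinearMap.mul ℝ ℍ) c
@[simp] lemma mulCLM_apply (c x : ℍ) : mulCLM c x = c * x := rfl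

/-! ### The slice points -/

lemma pt_re (x y : ℝ) {i : ℍ} (hi : i.re = 0) : ((x:ℍ) + y • i).re = x := by simp [hi]

lemma pt_im (x y : ℝ) {i : ℍ} (hi : i.re = 0) : ((x:ℍ) + y • i).im = y • i := by
  simp [Quaternion.im_smul, im_eq_self hi]

lemma pt_norm_im (x y : ℝ) {i : ℍ} (hi : Sph2 i) : ‖((x:ℍ) + y • i).im‖ = |y| := by
  rw [pt_im x y hi.1, norm_smul, hi.2, mul_one, Real.norm_eq_abs]

/-! ### The explicit slice formula for `Pext` -/

lemma pext_slice (k : ℍ) (g : ℝ × ℝ → ℍ) {i : ℍ} (hi : Sph2 i) (u v : ℝ) :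
    Pext k g ((u:ℍ) + v • i)
      = (2⁻¹ : ℝ) • ((1 + i * k) * g (u, -v) + (1 - i * k) * g (u, v)) := by
  have hre : ((u:ℍ) + v • i).re = u := pt_re u v hi.1
  have him : ((u:ℍ) + v • i).im = v • i := pt_im u v hi.1
  have hnim : ‖((u:ℍ) + v • i).im‖ = |v| := pt_norm_im u v hi
  have hi0 : i ≠ 0 := by
    intro h; have h2 := hi.2; rw [h, norm_zero] at h2; exact one_ne_zero h2.symm
  rcases eq_or_ne v 0 with hv | hv
  · subst hv
    have h0 : ((u:ℍ) + (0:ℝ) • i).im = 0 := by rw [him, zero_smul]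
    rw [Pext, hre, h0, norm_zero, neg_zero]
    congr 1
    noncomm_ring
  · have h0 : ((u:ℍ) + v • i).im ≠ 0 := by
      rw [him]; exact smul_ne_zero hv hi0
    rw [Pext, show Imu ((u:ℍ) + v • i) = ‖((u:ℍ) + v • i).im‖⁻¹ • ((u:ℍ) + v • i).im from if_neg h0, hre, hnim, him, smul_smul]
    rcases lt_or_gt_of_ne hv with hneg | hpos
    · rw [abs_of_neg hneg]
      have h1 : (-v)⁻¹ * v = -1 := by field_simp
      rw [h1, neg_one_smul, neg_neg]
      congr 1
      noncomm_ring
    · rw [abs_of_pos hpos]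
      have h1 : v⁻¹ * v = 1 := inv_mul_cancel₀ hv
      rw [h1, one_smul]

lemma two_smul_cancel (A : ℍ) : (2⁻¹ : ℝ) • (A + A) = A := by
  rw [← two_smul ℝ A, smul_smul]
  norm_num

lemma pext_real (k : ℍ) (g : ℝ × ℝ → ℍ) (x : ℝ) : Pext k g (x : ℍ) = g (x, 0) := by
  rw [Pext, Quaternion.re_coe, Quaternion.im_coe, norm_zero, neg_zero]
  rw [show (1 + Imu (x:ℍ) * k) * g (x,0) + (1 - Imu (x:ℍ) * k) * g (x,0)
      = g (x,0) + g (x,0) by noncomm_ring]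
  exact two_smul_cancel _

/-! ### The slice function `sliceFun` -/

lemma isOpen_unitDisk : IsOpen unitDisk := by
  have h : unitDisk = (fun p : ℝ × ℝ => p.1 ^ 2 + p.2 ^ 2) ⁻¹' Set.Iio 1 := rfl
  rw [h]
  exact (((continuous_fst.pow 2).add (continuous_snd.pow 2))).isOpen_preimage _ isOpen_Iio

variable {a b c d : ℝ × ℝ → ℝ} {k l : ℍ}

lemma diffAt_of_harm (ha : HarmonicOnDisk a) {p : ℝ × ℝ} (hp : p ∈ unitDisk) :
    DifferentiableAt ℝ a p :=
  (ha.1.differentiableOn two_ne_zero).differentiableAt (isOpen_unitDisk.mem_nhds hp)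

lemma sliceFun_eq (a b c d : ℝ × ℝ → ℝ) (k l : ℍ) :
    sliceFun a b c d k l
      = fun p => a p • (1:ℍ) + b p • k + c p • l + d p • (k * l) := by
  funext p; rw [sliceFun, coe_eq_smul_one]

def gD (a b c d : ℝ×ℝ→ℝ) (k l : ℍ) (p : ℝ×ℝ) : (ℝ×ℝ) →L[ℝ] ℍ :=
  (fderiv ℝ a p).smulRight 1 + (fderiv ℝ b p).smulRight k +
    (fderiv ℝ c p).smulRight l + (fderiv ℝ d p).smulRight (k*l)

lemma gD_apply (p v : ℝ×ℝ) : gD a b c d k l p v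
    = fderiv ℝ a p v • (1:ℍ) + fderiv ℝ b p v • k + fderiv ℝ c p v • l
      + fderiv ℝ d p v • (k*l) := by
  simp [gD]

lemma sliceFun_hasFDerivAt (ha : HarmonicOnDisk a) (hb : HarmonicOnDisk b)
    (hc : HarmonicOnDisk c) (hd : HarmonicOnDisk d) {p : ℝ × ℝ} (hp : p ∈ unitDisk) :
    HasFDerivAt (sliceFun a b c d k l) (gD a b c d k l p) p := by
  rw [sliceFun_eq]
  exact (((((diffAt_of_harm ha hp).hasFDerivAt.smul_const (1:ℍ)).add
    ((diffAt_of_harm hb hp).hasFDerivAt.smul_const k)).add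
    ((diffAt_of_harm hc hp).hasFDerivAt.smul_const l)).add
    ((diffAt_of_harm hd hp).hasFDerivAt.smul_const (k*l)))

lemma sliceFun_contDiffOn (ha : HarmonicOnDisk a) (hb : HarmonicOnDisk b)
    (hc : HarmonicOnDisk c) (hd : HarmonicOnDisk d) :
    ContDiffOn ℝ 2 (sliceFun a b c d k l) unitDisk := by
  rw [sliceFun_eq]
  have h1 : ContDiffOn ℝ 2 (fun p => a p • (1:ℍ)) unitDisk := ha.1.smul contDiffOn_const
  have h2 : ContDiffOn ℝ 2 (fun p => b p • k) unitDisk := hb.1.smul contDiffOn_const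
  have h3 : ContDiffOn ℝ 2 (fun p => c p • l) unitDisk := hc.1.smul contDiffOn_const
  have h4 : ContDiffOn ℝ 2 (fun p => d p • (k*l)) unitDisk := hd.1.smul contDiffOn_const
  exact ((h1.add h2).add h3).add h4

lemma g_CR (hab : HLpair a b) (hcd : HLpair c d) (hk : k * k = -1)
    {p : ℝ × ℝ} (hp : p ∈ unitDisk) :
    gD a b c d k l p (1,0) + k * (gD a b c d k l p (0,1)) = 0 := by
  obtain ⟨hax, hay⟩ := hab.1.2.2 p hp
  obtain ⟨hcx, hcy⟩ := hcd.1.2.2 p hp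
  rw [gD_apply, gD_apply, hax, hay, hcx, hcy]
  simp only [mul_add, mul_smul_comm, mul_one]
  rw [← mul_assoc, hk]
  simp only [neg_one_mul, smul_neg, mul_one]
  module

/-! ### The restriction of `Pext` to a slice and its derivative -/

def hfun (i k : ℍ) (g : ℝ × ℝ → ℍ) (p : ℝ × ℝ) : ℍ :=
  (2⁻¹ : ℝ) • ((1 + i * k) * g (p.1, -p.2) + (1 - i * k) * g (p.1, p.2))

def hD (i k : ℍ) (G' G : (ℝ×ℝ) →L[ℝ] ℍ) : (ℝ×ℝ) →L[ℝ] ℍ :=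
  (2⁻¹ : ℝ) • ((mulCLM (1 + i * k)).comp (G'.comp sgCLM) + (mulCLM (1 - i * k)).comp G)

lemma hfun_hasFDerivAt {g : ℝ × ℝ → ℍ} {i : ℍ} {G' G : (ℝ×ℝ) →L[ℝ] ℍ} {p : ℝ × ℝ}
    (hg' : HasFDerivAt g G' (p.1, -p.2)) (hg : HasFDerivAt g G p) :
    HasFDerivAt (hfun i k g) (hD i k G' G) p := by
  have hσ : HasFDerivAt (fun p : ℝ×ℝ => (p.1, -p.2)) sgCLM p := sgCLM.hasFDerivAt
  have h1 : HasFDerivAt (fun p : ℝ×ℝ => g (p.1, -p.2)) (G'.comp sgCLM) p :=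
    hg'.comp p hσ
  have h2 : HasFDerivAt (fun p : ℝ×ℝ => (1 + i*k) * g (p.1, -p.2))
      ((mulCLM (1 + i*k)).comp (G'.comp sgCLM)) p :=
    (mulCLM (1 + i*k)).hasFDerivAt.comp p h1
  have h3 : HasFDerivAt (fun p : ℝ×ℝ => (1 - i*k) * g p)
      ((mulCLM (1 - i*k)).comp G) p := (mulCLM (1 - i*k)).hasFDerivAt.comp p hg
  exact ((h2.add h3).const_smul (2⁻¹ : ℝ))

lemma hD_x {i : ℍ} (G' G : (ℝ×ℝ) →L[ℝ] ℍ) :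
    hD i k G' G (1, 0) = (2⁻¹ : ℝ) • ((1 + i*k) * G' (1,0) + (1 - i*k) * G (1,0)) := by
  simp [hD]

lemma hD_y {i : ℍ} (G' G : (ℝ×ℝ) →L[ℝ] ℍ) :
    hD i k G' G (0, 1) = (2⁻¹ : ℝ) • ((1 + i*k) * (-G' (0,1)) + (1 - i*k) * G (0,1)) := by
  have h1 : sgCLM ((0:ℝ),(1:ℝ)) = -((0:ℝ),(1:ℝ)) := by
    show ((0:ℝ), -(1:ℝ)) = _
    simp [Prod.ext_iff]
  rw [hD]
  simp only [ContinuousLinearMap.smul_apply, ContinuousLinearMap.add_apply,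
    ContinuousLinearMap.coe_comp', Function.comp_apply, mulCLM_apply, h1, map_neg, mul_neg,
    neg_mul]

lemma CR_identity {i : ℍ} {G' G : (ℝ×ℝ) →L[ℝ] ℍ}
    (hi : i * i = -1) (hk : k * k = -1)
    (hG' : G' (1,0) + k * G' (0,1) = 0) (hG : G (1,0) + k * G (0,1) = 0) :
    hD i k G' G (1,0) + i * hD i k G' G (0,1) = 0 := by
  have e1 : G' (1,0) = -(k * G' (0,1)) := by linear_combination (norm := abel) hG'
  have e2 : G (1,0) = -(k * G (0,1)) := by linear_combination (norm := abel) hG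
  rw [hD_x, hD_y, e1, e2, mul_smul_comm, ← smul_add]
  have hk0 : ∀ w : ℍ, k * (k * w) = -w := fun w => by rw [← mul_assoc, hk, neg_one_mul]
  have hi0 : ∀ w : ℍ, i * (i * w) = -w := fun w => by rw [← mul_assoc, hi, neg_one_mul]
  have h : ((1 + i*k) * (-(k * G' (0,1))) + (1 - i*k) * (-(k * G (0,1))))
      + i * ((1 + i*k) * (-G' (0,1)) + (1 - i*k) * G (0,1)) = 0 := by
    simp only [mul_add, add_mul, sub_mul, mul_sub, one_mul, mul_neg, neg_mul, mul_assoc,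
      hk0, hi0, neg_neg]
    abel
  rw [h, smul_zero]

/-! ### Chain rule through the slice embedding -/

lemma fderiv_on_slice {f : ℍ → ℍ} {h : ℝ × ℝ → ℍ} {i : ℍ} {H : (ℝ×ℝ) →L[ℝ] ℍ}
    (hcomp : ∀ s t : ℝ, f ((s:ℍ) + t • i) = h (s, t)) (u v : ℝ)
    (hf : DifferentiableAt ℝ f ((u:ℍ) + v • i))
    (hH : HasFDerivAt h H (u, v)) :
    fderiv ℝ f ((u:ℍ) + v • i) 1 = H (1, 0) ∧
      fderiv ℝ f ((u:ℍ) + v • i) i = H (0, 1) := by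
  have hφ : HasFDerivAt (slCLM i) (slCLM i) (u, v) := (slCLM i).hasFDerivAt
  have hcomp2 : f ∘ (slCLM i) = h := by
    funext p
    exact hcomp p.1 p.2
  have h1 : HasFDerivAt h ((fderiv ℝ f ((u:ℍ) + v • i)).comp (slCLM i)) (u, v) := by
    rw [← hcomp2]
    exact hf.hasFDerivAt.comp (u, v) hφ
  have he : H = (fderiv ℝ f ((u:ℍ) + v • i)).comp (slCLM i) := hH.unique h1
  constructor
  · rw [he]
    simp only [ContinuousLinearMap.coe_comp', Function.comp_apply, slCLM_apply]
    norm_num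
  · rw [he]
    simp only [ContinuousLinearMap.coe_comp', Function.comp_apply, slCLM_apply]
    norm_num

/-! ### Differentiability of `Pext` off the real axis -/

lemma pext_differentiableAt_of_im_ne {k : ℍ} {g : ℝ×ℝ→ℍ} {q : ℍ} (hq : q.im ≠ 0)
    (hg1 : DifferentiableAt ℝ g (q.re, -‖q.im‖))
    (hg2 : DifferentiableAt ℝ g (q.re, ‖q.im‖)) :
    DifferentiableAt ℝ (Pext k g) q := by
  have hopen : IsOpen {p : ℍ | p.im ≠ 0} := by
    have he : {p : ℍ | p.im ≠ 0} = (fun p : ℍ => p.im) ⁻¹' ({0}ᶜ) := rfl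
    rw [he]
    exact isOpen_compl_singleton.preimage imCLM.continuous
  set F : ℍ → ℍ := fun p =>
    (2⁻¹ : ℝ) • ((1 + (‖p.im‖⁻¹ • p.im) * k) * g (p.re, -‖p.im‖)
      + (1 - (‖p.im‖⁻¹ • p.im) * k) * g (p.re, ‖p.im‖)) with hF
  have heq : ∀ᶠ p in 𝓝 q, Pext k g p = F p := by
    filter_upwards [hopen.mem_nhds hq] with p hp
    rw [Pext, show Imu p = ‖p.im‖⁻¹ • p.im from if_neg hp, hF]
  have hre : DifferentiableAt ℝ (fun p : ℍ => p.re) q := reCLM.differentiableAt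
  have him : DifferentiableAt ℝ (fun p : ℍ => p.im) q := imCLM.differentiableAt
  have hnorm : DifferentiableAt ℝ (fun p : ℍ => ‖p.im‖) q := him.norm ℝ hq
  have hninv : DifferentiableAt ℝ (fun p : ℍ => ‖p.im‖⁻¹) q :=
    hnorm.inv (norm_ne_zero_iff.2 hq)
  have hIu : DifferentiableAt ℝ (fun p : ℍ => ‖p.im‖⁻¹ • p.im) q := hninv.smul him
  have hIuk : DifferentiableAt ℝ (fun p : ℍ => (‖p.im‖⁻¹ • p.im) * k) q :=
    hIu.mul (differentiableAt_const k)
  have hc1 : DifferentiableAt ℝ (fun p : ℍ => 1 + (‖p.im‖⁻¹ • p.im) * k) q :=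
    (differentiableAt_const 1).add hIuk
  have hc2 : DifferentiableAt ℝ (fun p : ℍ => 1 - (‖p.im‖⁻¹ • p.im) * k) q :=
    (differentiableAt_const 1).sub hIuk
  have hgm : DifferentiableAt ℝ (fun p : ℍ => g (p.re, -‖p.im‖)) q :=
    hg1.comp q (hre.prodMk hnorm.neg)
  have hgp : DifferentiableAt ℝ (fun p : ℍ => g (p.re, ‖p.im‖)) q :=
    hg2.comp q (hre.prodMk hnorm)
  have hFd : DifferentiableAt ℝ F q := by
    rw [hF]
    exact ((hc1.mul hgm).add (hc2.mul hgp)).const_smul (2⁻¹ : ℝ)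
  exact hFd.congr_of_eventuallyEq heq

/-! ### Differentiability of `Pext` at real points -/

set_option maxHeartbeats 1000000 in
lemma pext_differentiableAt_real {k : ℍ} (hknorm : ‖k‖ = 1) {g : ℝ×ℝ→ℍ}
    (hg : ContDiffOn ℝ 2 g unitDisk) {x₀ : ℝ} (hx : ((x₀ : ℝ), (0:ℝ)) ∈ unitDisk) :
    DifferentiableAt ℝ (Pext k g) ((x₀ : ℍ)) := by
  set p₀ : ℝ × ℝ := (x₀, 0) with hp₀
  have hdiff : ∀ p ∈ unitDisk, DifferentiableAt ℝ g p := fun p hp =>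
    (hg.differentiableOn two_ne_zero).differentiableAt (isOpen_unitDisk.mem_nhds hp)
  have hcont : ContinuousAt (fderiv ℝ g) p₀ :=
    (hg.continuousOn_fderiv_of_isOpen isOpen_unitDisk one_le_two).continuousAt
      (isOpen_unitDisk.mem_nhds hx)
  set G₀ := fderiv ℝ g p₀ with hG₀
  set Gx := G₀ (1,0) with hGx
  set Gy := G₀ (0,1) with hGy
  set c : ℍ := -(k * Gy) with hc
  set L : ℍ →L[ℝ] ℍ :=
    reCLM.smulRight Gx + ((ContinuousLinearMap.mul ℝ ℍ).flip c).comp imCLM with hL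
  have hLapp : ∀ x : ℍ, L x = x.re • Gx + x.im * c := fun x => by
    rw [hL]
    simp
  suffices H : HasFDerivAt (Pext k g) L (x₀ : ℍ) from H.differentiableAt
  rw [hasFDerivAt_iff_isLittleO_nhds_zero, Asymptotics.isLittleO_iff]
  intro C hC
  set ε := C / 2 with hε
  have hεpos : 0 < ε := by positivity
  have h1 : ∀ᶠ p in 𝓝 p₀, p ∈ unitDisk := isOpen_unitDisk.mem_nhds hx
  have h2 : ∀ᶠ p in 𝓝 p₀, ‖fderiv ℝ g p - G₀‖ < ε :=
    (hcont.eventually (Metric.ball_mem_nhds G₀ hεpos)).mono fun p hp => by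
      have e := dist_eq_norm (fderiv ℝ g p) G₀
      exact lt_of_eq_of_lt e.symm hp
  obtain ⟨δ, hδpos, hδ⟩ := Metric.eventually_nhds_iff_ball.mp (h1.and h2)
  have taylor : ∀ p ∈ Metric.ball p₀ δ, ‖g p - g p₀ - G₀ (p - p₀)‖ ≤ ε * ‖p - p₀‖ :=
    fun p hp => (convex_ball p₀ δ).norm_image_sub_le_of_norm_fderiv_le'
      (fun q hq => hdiff q (hδ q hq).1) (fun q hq => (hδ q hq).2.le)
      (Metric.mem_ball_self hδpos) hp
  filter_upwards [Metric.ball_mem_nhds (0:ℍ) hδpos] with h hh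
  have hnh : ‖h‖ < δ := by rwa [Metric.mem_ball, dist_zero_right] at hh
  set t := h.re with ht
  set y := ‖h.im‖ with hy
  set q : ℍ := (x₀ : ℍ) + h with hq
  have hqre : q.re = x₀ + t := by rw [hq]; simp [ht]
  have hqim : q.im = h.im := by rw [hq]; simp
  have htle : |t| ≤ ‖h‖ := abs_re_le_norm h
  have hyle : y ≤ ‖h‖ := norm_im_le_norm h
  have hyn : 0 ≤ y := norm_nonneg _
  set pm : ℝ × ℝ := (x₀ + t, -y) with hpm
  set pp : ℝ × ℝ := (x₀ + t, y) with hpp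
  have hdm : ‖pm - p₀‖ ≤ ‖h‖ := by
    rw [hpm, hp₀, Prod.norm_def]
    simp only [Prod.fst_sub, Prod.snd_sub, add_sub_cancel_left, sub_zero]
    rw [Real.norm_eq_abs, Real.norm_eq_abs, abs_neg, abs_of_nonneg hyn]
    exact max_le htle hyle
  have hdp : ‖pp - p₀‖ ≤ ‖h‖ := by
    rw [hpp, hp₀, Prod.norm_def]
    simp only [Prod.fst_sub, Prod.snd_sub, add_sub_cancel_left, sub_zero]
    rw [Real.norm_eq_abs, Real.norm_eq_abs, abs_of_nonneg hyn]
    exact max_le htle hyle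
  have hpm_ball : pm ∈ Metric.ball p₀ δ := by
    rw [Metric.mem_ball, dist_eq_norm]; exact lt_of_le_of_lt hdm hnh
  have hpp_ball : pp ∈ Metric.ball p₀ δ := by
    rw [Metric.mem_ball, dist_eq_norm]; exact lt_of_le_of_lt hdp hnh
  set Rm := g pm - g p₀ - G₀ (pm - p₀) with hRm
  set Rp := g pp - g p₀ - G₀ (pp - p₀) with hRp
  have hRmle : ‖Rm‖ ≤ ε * ‖h‖ :=
    le_trans (taylor pm hpm_ball) (mul_le_mul_of_nonneg_left hdm hεpos.le)
  have hRple : ‖Rp‖ ≤ ε * ‖h‖ :=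
    le_trans (taylor pp hpp_ball) (mul_le_mul_of_nonneg_left hdp hεpos.le)
  have hsubm : pm - p₀ = (t, -y) := by rw [hpm, hp₀, Prod.ext_iff]; constructor <;> simp
  have hsubp : pp - p₀ = (t, y) := by rw [hpp, hp₀, Prod.ext_iff]; constructor <;> simp
  have hGm : G₀ (pm - p₀) = t • Gx - y • Gy := by
    rw [hsubm, show ((t, -y) : ℝ×ℝ) = t • ((1:ℝ),(0:ℝ)) + (-y) • ((0:ℝ),(1:ℝ)) by
      rw [Prod.ext_iff]; constructor <;> simp]
    rw [map_add, G₀.map_smul, G₀.map_smul, neg_smul, ← sub_eq_add_neg]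
  have hGp : G₀ (pp - p₀) = t • Gx + y • Gy := by
    rw [hsubp, show ((t, y) : ℝ×ℝ) = t • ((1:ℝ),(0:ℝ)) + y • ((0:ℝ),(1:ℝ)) by
      rw [Prod.ext_iff]; constructor <;> simp]
    rw [map_add, G₀.map_smul, G₀.map_smul]
  have hgm : g pm = g p₀ + (t • Gx - y • Gy) + Rm := by rw [hRm, hGm]; abel
  have hgp : g pp = g p₀ + (t • Gx + y • Gy) + Rp := by rw [hRp, hGp]; abel
  have him : h.im = y • Imu q := by rw [← hqim, hy, ← hqim, smul_Imu]
  clear_value G₀ Gx Gy c L q t y pm pp Rm Rp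
  have key : Pext k g q - Pext k g (x₀:ℍ) - L h
      = (2⁻¹:ℝ) • (Rm + Rp) + (2⁻¹:ℝ) • ((Imu q * k) * (Rm - Rp)) := by
    rw [pext_real, hLapp]
    rw [show Pext k g q = (2⁻¹ : ℝ) •
        ((1 + Imu q * k) * g pm + (1 - Imu q * k) * g pp) by
      rw [Pext, hqre, hqim, ← hy, hpm, hpp]]
    rw [hgm, hgp, ← ht, him, hc, ← hp₀]
    simp only [mul_add, add_mul, sub_mul, mul_sub, one_mul, mul_one, mul_smul_comm,
      smul_mul_assoc, smul_add, smul_sub, mul_neg, neg_mul, mul_assoc]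
    module
  rw [key]
  have hIk : ‖Imu q * k‖ = 1 := by rw [norm_mul, norm_Imu, hknorm, mul_one]
  calc ‖(2⁻¹:ℝ) • (Rm + Rp) + (2⁻¹:ℝ) • ((Imu q * k) * (Rm - Rp))‖
      ≤ ‖(2⁻¹:ℝ) • (Rm + Rp)‖ + ‖(2⁻¹:ℝ) • ((Imu q * k) * (Rm - Rp))‖ := norm_add_le _ _
    _ = 2⁻¹ * ‖Rm + Rp‖ + 2⁻¹ * (‖Imu q * k‖ * ‖Rm - Rp‖) := by
        rw [norm_smul, norm_smul, norm_mul]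
        norm_num
    _ ≤ 2⁻¹ * (‖Rm‖ + ‖Rp‖) + 2⁻¹ * (‖Rm‖ + ‖Rp‖) := by
        rw [hIk, one_mul]
        have h5 := norm_add_le Rm Rp
        have h6 := norm_sub_le Rm Rp
        linarith
    _ ≤ C * ‖h‖ := by
        rw [hε] at hRmle hRple
        have hn : (0:ℝ) ≤ ‖h‖ := norm_nonneg _
        linarith

end PextAux

/-- For conjugate harmonic pairs `(a,b), (c,d)` of finite `L²(D)` norm and
`(k,l) ∈ T`, the function `P_{k,l}[a + bk + cl + dkl]` is slice regular on `𝔹⁴`. -/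
theorem Pext_slice_regular (k l : ℍ) (hkl : OrthPair k l)
    (a b c d : ℝ × ℝ → ℝ) (hab : HLpair a b) (hcd : HLpair c d) :
    SliceRegularOn (Pext k (sliceFun a b c d k l)) B4 := by
  intro i hi x y hmem
  set g := sliceFun a b c d k l with hg
  obtain ⟨hk, hl, hkl2⟩ := hkl
  have hk2 : k * k = -1 := PextAux.mul_self_of_sph2 hk
  have hi2 : i * i = -1 := PextAux.mul_self_of_sph2 hi
  -- membership facts
  have hnormq : ‖(x:ℍ) + y • i‖ < 1 := hmem
  have hxy : x^2 + y^2 < 1 := by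
    have hd := PextAux.norm_sq_decomp ((x:ℍ) + y • i)
    rw [PextAux.pt_re x y hi.1, PextAux.pt_norm_im x y hi, sq_abs] at hd
    nlinarith [norm_nonneg ((x:ℍ) + y • i)]
  have hmem1 : ((x, y) : ℝ × ℝ) ∈ unitDisk := hxy
  have hmem2 : ((x, -y) : ℝ × ℝ) ∈ unitDisk := by
    show x^2 + (-y)^2 < 1
    rw [neg_pow]
    simpa using hxy
  have ha := hab.1.1
  have hb := hab.1.2.1
  have hc := hcd.1.1
  have hd := hcd.1.2.1
  -- differentiability
  have hdiffAt : DifferentiableAt ℝ (Pext k g) ((x:ℍ) + y • i) := by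
    by_cases hy0 : y = 0
    · subst hy0
      have hpt : ((x:ℍ) + (0:ℝ) • i) = (x:ℍ) := by rw [zero_smul, add_zero]
      rw [hpt]
      exact PextAux.pext_differentiableAt_real hk.2
        (PextAux.sliceFun_contDiffOn ha hb hc hd) hmem1
    · have hqim : ((x:ℍ) + y • i).im ≠ 0 := by
        rw [PextAux.pt_im x y hi.1]
        refine smul_ne_zero hy0 ?_
        intro h0
        have h2 := hi.2
        rw [h0, norm_zero] at h2
        exact one_ne_zero h2.symm
      have hre : ((x:ℍ) + y • i).re = x := PextAux.pt_re x y hi.1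
      have hnim : ‖((x:ℍ) + y • i).im‖ = |y| := PextAux.pt_norm_im x y hi
      have habs1 : ((x, |y|) : ℝ × ℝ) ∈ unitDisk := by
        show x^2 + |y|^2 < 1
        rw [sq_abs]; exact hxy
      have habs2 : ((x, -|y|) : ℝ × ℝ) ∈ unitDisk := by
        show x^2 + (-|y|)^2 < 1
        rw [neg_pow, sq_abs]; simpa using hxy
      refine PextAux.pext_differentiableAt_of_im_ne hqim ?_ ?_
      · rw [hre, hnim]
        exact (PextAux.sliceFun_hasFDerivAt ha hb hc hd habs2).differentiableAt
      · rw [hre, hnim]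
        exact (PextAux.sliceFun_hasFDerivAt ha hb hc hd habs1).differentiableAt
  -- the slice restriction and its derivative
  have hcomp : ∀ s t : ℝ, Pext k g ((s:ℍ) + t • i) = PextAux.hfun i k g (s, t) :=
    fun s t => PextAux.pext_slice k g hi s t
  have hG' := PextAux.sliceFun_hasFDerivAt (k := k) (l := l) ha hb hc hd hmem2
  have hG := PextAux.sliceFun_hasFDerivAt (k := k) (l := l) ha hb hc hd hmem1
  have hH : HasFDerivAt (PextAux.hfun i k g)
      (PextAux.hD i k (PextAux.gD a b c d k l (x, -y)) (PextAux.gD a b c d k l (x, y)))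
      (x, y) := PextAux.hfun_hasFDerivAt (by exact hG') (by exact hG)
  obtain ⟨e1, e2⟩ := PextAux.fderiv_on_slice hcomp x y hdiffAt hH
  refine ⟨hdiffAt, ?_⟩
  rw [e1, e2]
  exact PextAux.CR_identity hi2 hk2
    (PextAux.g_CR hab hcd hk2 hmem2) (PextAux.g_CR hab hcd hk2 hmem1)
end
end
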